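/- arXiv:2303.15194 — 5 statements merged into one kernel-verified Lean document; each statement's English description precedes it below -/
import Mathlib

section
/- For every connected graph H and every k ≥ 3, the online Ramsey number satisfies r̃(C_k, H) ≥ |V(H)| + |E(H)| − 1. In particular, r̃(C_k, C_n) ≥ 2n − 1 for every k ≥ 3 and n ≥ 3. -/
open SimpleGraph

/-- A board state: the set of red edges and the set of blue edges. -/
abbrev Board : Type := Set (Sym2 ℕ) × Set (Sym2 ℕ)

/-- The set of already colored edges of a board. -/
def Board.colored (B : Board) : Set (Sym2 ℕ) := B.1 ∪ B.2

/-- A Builder strategy selects an edge given the current board. -/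
abbrev BuilderStrat : Type := Board → Sym2 ℕ

/-- A Painter strategy colors the selected edge (true = red, false = blue). -/
abbrev PainterStrat : Type := Board → Sym2 ℕ → Bool

/-- The board after `t` rounds of play from `init`. -/
def playGame (b : BuilderStrat) (p : PainterStrat) (init : Board) : ℕ → Board
  | 0 => init
  | t + 1 =>
      let B := playGame b p init t
      let e := b B
      if p B e then (insert e B.1, B.2) else (B.1, insert e B.2)

/-- Builder's strategy is valid from `init`: along any play it always selects a
previously unselected non-loop edge. -/
def ValidFrom (b : BuilderStrat) (init : Board) : Prop :=
  ∀ p : PainterStrat, ∀ t : ℕ,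
    ¬ (b (playGame b p init t)).IsDiag ∧
      b (playGame b p init t) ∉ (playGame b p init t).colored

/-- Builder can force the winning condition `W` within `t` rounds, starting from `init`. -/
def BuilderWinsIn (init : Board) (W : Board → Prop) (t : ℕ) : Prop :=
  ∃ b : BuilderStrat, ValidFrom b init ∧
    ∀ p : PainterStrat, ∃ s, s ≤ t ∧ W (playGame b p init s)

/-- `G` contains a copy of `H`. -/
def HasCopy {α β : Type} (H : SimpleGraph α) (G : SimpleGraph β) : Prop :=
  ∃ f : α ↪ β, ∀ x y, H.Adj x y → G.Adj (f x) (f y)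

/-- The red part of the board contains a copy of `H`. -/
def RedCopy {α : Type} (H : SimpleGraph α) (B : Board) : Prop :=
  HasCopy H (fromEdgeSet B.1)

/-- The blue part of the board contains a copy of `H`. -/
def BlueCopy {α : Type} (H : SimpleGraph α) (B : Board) : Prop :=
  HasCopy H (fromEdgeSet B.2)

/-- The empty board. -/
def emptyBoard : Board := (∅, ∅)

/-- Winning condition: a red `C_k` or a blue `C_n`. -/
def WinCC (k n : ℕ) (B : Board) : Prop :=
  RedCopy (cycleGraph k) B ∨ BlueCopy (cycleGraph n) B

/-- Winning condition: a red `C_k` or a blue path on `n` vertices. -/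
def WinCP (k n : ℕ) (B : Board) : Prop :=
  RedCopy (cycleGraph k) B ∨ BlueCopy (pathGraph n) B

/-- A board consisting of a single blue cycle on the vertices `0, …, m-1`. -/
def blueCycleBoard (m : ℕ) : Board :=
  (∅, {e | ∃ i : ℕ, i < m ∧ e = s(i, (i + 1) % m)})

/-- A board consisting of a single blue path on the vertices `0, …, m-1`. -/
def bluePathBoard (m : ℕ) : Board :=
  (∅, {e | ∃ i : ℕ, i + 1 < m ∧ e = s(i, i + 1)})

open Classical in
/-- The conservative painter: paints red unless that would merge two
red-connected vertices (which would risk a red cycle). -/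
noncomputable def painter0 : PainterStrat := fun B e =>
  decide (∀ x y : ℕ, e = s(x, y) → ¬ (fromEdgeSet B.1).Reachable x y)

open Classical in
lemma painter0_spec (B : Board) (e : Sym2 ℕ) :
    painter0 B e = true ↔
      ∀ x y : ℕ, e = s(x, y) → ¬ (fromEdgeSet B.1).Reachable x y := by
  simp [painter0]

lemma acyclic_insert {E : Set (Sym2 ℕ)} {x y : ℕ}
    (hac : (fromEdgeSet E).IsAcyclic)
    (hr : ¬ (fromEdgeSet E).Reachable x y) :
    (fromEdgeSet (insert s(x, y) E)).IsAcyclic := by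
  intro v c hc
  by_cases hm : s(x, y) ∈ c.edges
  · have h := (adj_and_reachable_delete_edges_iff_exists_cycle.mpr ⟨v, c, hc, hm⟩).2
    refine hr (h.mono ?_)
    intro a b hab
    rw [deleteEdges_adj, fromEdgeSet_adj] at hab
    rw [fromEdgeSet_adj]
    obtain ⟨⟨h1, h2⟩, h3⟩ := hab
    have h3' : s(a, b) ≠ s(x, y) := fun hh => h3 (Set.mem_singleton_iff.mpr hh)
    rcases Set.mem_insert_iff.mp h1 with h | h
    · exact absurd h h3'
    · exact ⟨h, h2⟩
  · have hsub : ∀ e ∈ c.edges, e ∈ (fromEdgeSet E).edgeSet := ?_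
    · exact hac (c.transfer (fromEdgeSet E) hsub) (hc.transfer hsub)
    intro e he
    have h1 : e ∈ (fromEdgeSet (insert s(x, y) E)).edgeSet := c.edges_subset_edgeSet he
    rw [edgeSet_fromEdgeSet] at h1 ⊢
    obtain ⟨h2, h3⟩ := h1
    rcases Set.mem_insert_iff.mp h2 with h | h
    · exact absurd h (fun hh => hm (hh ▸ he))
    · exact ⟨h, h3⟩

-- chain walk
lemma exists_chain_walk {α : Type} (G : SimpleGraph α) (g : ℕ → α) (a : ℕ) :
    ∀ n : ℕ, (∀ i, a ≤ i → i < a + n → G.Adj (g i) (g (i + 1))) →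
    ∃ w : G.Walk (g a) (g (a + n)),
      ∀ e ∈ w.edges, ∃ i, a ≤ i ∧ i < a + n ∧ e = s(g i, g (i + 1))
  | 0, _ => ⟨Walk.nil, by simp⟩
  | n + 1, h => by
    obtain ⟨w, hw⟩ := exists_chain_walk G g a n (fun i h1 h2 => h i h1 (by omega))
    refine ⟨w.concat (h (a + n) (by omega) (by omega)), ?_⟩
    intro e he
    rw [Walk.edges_concat, List.concat_eq_append] at he
    rcases List.mem_append.mp he with he | he
    
    · obtain ⟨i, h1, h2, h3⟩ := hw e he
      exact ⟨i, h1, by omega, h3⟩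
    · exact ⟨a + n, by omega, by omega, by simpa [Nat.add_assoc] using he⟩

/-- The invariant maintained by `painter0`. -/
def Inv0 (B : Board) (t : ℕ) : Prop :=
  (fromEdgeSet B.1).IsAcyclic ∧
  (∀ e ∈ B.2, ∀ x y : ℕ, e = s(x, y) → (fromEdgeSet B.1).Reachable x y) ∧
  B.1.Finite ∧ B.2.Finite ∧ B.1.ncard + B.2.ncard ≤ t

lemma inv0_preserved (b : BuilderStrat) (hb : ValidFrom b emptyBoard) :
    ∀ t : ℕ, Inv0 (playGame b painter0 emptyBoard t) t := by
  intro t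
  induction t with
  | zero =>
    refine ⟨by simp [playGame, emptyBoard], by simp [playGame, emptyBoard], ?_, ?_, ?_⟩ <;>
      simp [playGame, emptyBoard]
  | succ t ih =>
    obtain ⟨hac, hblue, hf1, hf2, hcard⟩ := ih
    set B := playGame b painter0 emptyBoard t with hB
    obtain ⟨hdiag, -⟩ := hb painter0 t
    obtain ⟨x, y, he⟩ : ∃ x y : ℕ, b B = s(x, y) :=
      Sym2.ind (fun x y => ⟨x, y, rfl⟩) (b B)
    have hxy : x ≠ y := by
      rw [← hB, he] at hdiag
      simpa [Sym2.mk_isDiag_iff] using hdiag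
    rw [show playGame b painter0 emptyBoard (t + 1) =
      (if painter0 B (b B) then (insert (b B) B.1, B.2) else (B.1, insert (b B) B.2))
      from rfl]
    by_cases hp : painter0 B (b B) = true
    · rw [if_pos hp]
      have hnr : ¬ (fromEdgeSet B.1).Reachable x y :=
        (painter0_spec B (b B)).mp hp x y he
      refine ⟨?_, ?_, hf1.insert _, hf2, ?_⟩
      · rw [he]
        exact acyclic_insert hac hnr
      · intro e hmem x' y' he'
        exact ((hblue e hmem x' y' he').mono (fromEdgeSet_mono (Set.subset_insert _ _)))
      · have h1 := Set.ncard_insert_le (b B) B.1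
        simp only
        omega
    · rw [if_neg hp]
      have hre : (fromEdgeSet B.1).Reachable x y := by
        have h1 : ¬ ∀ x y : ℕ, b B = s(x, y) → ¬ (fromEdgeSet B.1).Reachable x y :=
          fun hall => hp ((painter0_spec B (b B)).mpr hall)
        push_neg at h1
        obtain ⟨x', y', he', hr'⟩ := h1
        rw [he] at he'
        rcases Sym2.eq_iff.mp he' with ⟨h1, h2⟩ | ⟨h1, h2⟩
        · rwa [h1, h2]
        · rw [h1, h2]; exact hr'.symm
      refine ⟨hac, ?_, hf1, hf2.insert _, ?_⟩
      · intro e hmem x' y' he'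
        rcases Set.mem_insert_iff.mp hmem with hmem | hmem
        · subst hmem
          rw [he] at he'
          rcases Sym2.eq_iff.mp he' with ⟨h1, h2⟩ | ⟨h1, h2⟩
          · rwa [← h1, ← h2]
          · rw [← h1, ← h2]; exact hre.symm
        · exact hblue e hmem x' y' he'
      · have h1 := Set.ncard_insert_le (b B) B.2
        simp only
        omega


open Fin.NatCast Fin.CommRing in
lemma no_red_cycle {k : ℕ} (hk : 3 ≤ k) {G : SimpleGraph ℕ} (hac : G.IsAcyclic) :
    ¬ HasCopy (cycleGraph k) G := by
  obtain ⟨m, rfl⟩ : ∃ m, k = m + 3 := ⟨k - 3, by omega⟩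
  rintro ⟨f, hf⟩
  set g : ℕ → ℕ := fun i => f ((i : ℕ) : Fin (m + 3)) with hg
  have hginj : ∀ i j, i < m + 3 → j < m + 3 → g i = g j → i = j := by
    intro i j hi hj hij
    have := f.injective hij
    have h1 : ((i : Fin (m + 3)) : ℕ) = ((j : Fin (m + 3)) : ℕ) := by rw [this]
    rwa [Fin.val_cast_of_lt hi, Fin.val_cast_of_lt hj] at h1
  have hstep : ∀ i : ℕ, G.Adj (g i) (g (i + 1)) := by
    intro i
    apply hf
    have : ((i + 1 : ℕ) : Fin (m + 3)) = (i : Fin (m + 3)) + 1 := by push_cast; ring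
    rw [this, cycleGraph_adj]
    right; exact add_sub_cancel_left _ _
  have hgwrap : g (m + 3) = g 0 := by
    rw [hg]; simp
  have hlast : G.Adj (g (m + 2)) (g 0) := by
    have h1 := hstep (m + 2)
    rwa [show (m + 2) + 1 = m + 3 from rfl, hgwrap] at h1
  -- walk from g 1 to g (m + 2)
  obtain ⟨w, hw⟩ := exists_chain_walk G g 1 (m + 1) (fun i h1 h2 => hstep i)
  have hlast' : G.Adj (g (1 + (m + 1))) (g 0) := by
    rw [show 1 + (m + 1) = m + 2 from by omega]; exact hlast
  set W : G.Walk (g 1) (g 0) := w.concat hlast' with hWdef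
  have hWe : ∀ e ∈ W.edges, e ≠ s(g 0, g 1) := by
    intro e he
    rw [hWdef, Walk.edges_concat, List.concat_eq_append] at he
    rcases List.mem_append.mp he with he | he
    · obtain ⟨i, h1, h2, h3⟩ := hw e he
      subst h3
      intro hcon
      rcases Sym2.eq_iff.mp hcon with ⟨ha, hb⟩ | ⟨ha, hb⟩
      · exact absurd (hginj _ _ (by omega) (by omega) ha.symm) (by omega)
      · exact absurd (hginj _ _ (by omega) (by omega) hb.symm) (by omega)
    · have h3 : e = s(g (1 + (m + 1)), g 0) := by simpa using he
      subst h3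
      intro hcon
      rcases Sym2.eq_iff.mp hcon with ⟨ha, hb⟩ | ⟨ha, hb⟩
      · exact absurd (hginj (1 + (m + 1)) 0 (by omega) (by omega) ha) (by omega)
      · exact absurd (hginj (1 + (m + 1)) 1 (by omega) (by omega) ha) (by omega)
  have hadj01 : G.Adj (g 0) (g 1) := hstep 0
  have hp := hac.path_unique (Path.singleton hadj01) W.reverse.toPath
  have hmem : s(g 0, g 1) ∈ (W.reverse.toPath : G.Walk (g 0) (g 1)).edges := by
    rw [← hp]
    simp [Path.singleton]
  have hmem2 : s(g 0, g 1) ∈ W.edges := by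
    have := Walk.edges_toPath_subset W.reverse hmem
    rwa [Walk.edges_reverse, List.mem_reverse] at this
  exact hWe _ hmem2 rfl

lemma exists_closer (G : SimpleGraph ℕ) (v x : ℕ) (hne : x ≠ v)
    (hr : G.Reachable v x) : ∃ y, G.Adj x y ∧ G.dist y v < G.dist x v := by
  have hr' : G.Reachable x v := hr.symm
  have hpos : 0 < G.dist x v := hr'.pos_dist_of_ne hne
  obtain ⟨p, hp⟩ := hr'.exists_walk_length_eq_dist
  cases p with
  | nil => simp at hp; omega
  | cons hadj q =>
    rename_i y
    refine ⟨y, hadj, ?_⟩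
    have h1 : G.dist y v ≤ q.length := dist_le q
    rw [Walk.length_cons] at hp
    omega

lemma card_le_of_reachable (R : Finset (Sym2 ℕ)) (S : Finset ℕ) (v : ℕ)
    (h : ∀ x ∈ S, (fromEdgeSet (↑R : Set (Sym2 ℕ))).Reachable v x) :
    S.card ≤ R.card + 1 := by
  classical
  set G := fromEdgeSet (↑R : Set (Sym2 ℕ)) with hG
  have key : ∀ x ∈ S.erase v, ∃ y, G.Adj x y ∧ G.dist y v < G.dist x v := by
    intro x hx
    exact exists_closer G v x (Finset.ne_of_mem_erase hx) (h x (Finset.mem_of_mem_erase hx))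
  choose! nb hnb1 hnb2 using key
  have hmap : ∀ x ∈ S.erase v, s(x, nb x) ∈ R := by
    intro x hx
    exact ((fromEdgeSet_adj _).mp (hnb1 x hx)).1
  have hinj : Set.InjOn (fun x => s(x, nb x)) ↑(S.erase v) := by
    intro a ha b hb hab
    simp only at hab
    rcases Sym2.eq_iff.mp hab with ⟨h1, h2⟩ | ⟨h1, h2⟩
    · exact h1
    · exfalso
      have d1 := hnb2 a ha
      have d2 := hnb2 b hb
      rw [h2, h1] at d1
      omega
  calc S.card ≤ (insert v (S.erase v)).card := Finset.card_le_card
        (fun x hx => by by_cases hxv : x = v <;> simp [hxv, Finset.mem_erase, hx])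
    _ ≤ (S.erase v).card + 1 := Finset.card_insert_le _ _
    _ ≤ R.card + 1 := by
        have := Finset.card_le_card_of_injOn (fun x => s(x, nb x)) hmap hinj
        omega
lemma images_reachable {V : Type} {H : SimpleGraph V} {G : SimpleGraph ℕ} {f : V → ℕ}
    (h : ∀ x y, H.Adj x y → G.Reachable (f x) (f y)) {x y : V} (hxy : H.Reachable x y) :
    G.Reachable (f x) (f y) := by
  obtain ⟨w⟩ := hxy
  induction w with
  | nil => exact Reachable.refl _
  | cons h' p ih => exact (h _ _ h').trans ih

theorem main_aux (k : ℕ) (hk : 3 ≤ k) (V : Type) (fV : Fintype V) (H : SimpleGraph V)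
    (dH : DecidableRel H.Adj) (fE : Fintype H.edgeSet) (hconn : H.Connected)
    (b : BuilderStrat) (hb : ValidFrom b emptyBoard) :
    ∃ p : PainterStrat, ∀ s : ℕ,
      s < Fintype.card V + H.edgeSet.toFinset.card - 1 →
        ¬ (RedCopy (SimpleGraph.cycleGraph k) (playGame b p emptyBoard s) ∨
           BlueCopy H (playGame b p emptyBoard s)) := by
  classical
  refine ⟨painter0, fun s hs hwin => ?_⟩
  obtain ⟨hac, hblue, hf1, hf2, hcard⟩ := inv0_preserved b hb s
  set B := playGame b painter0 emptyBoard s with hB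
  rcases hwin with hred | hblue2
  · exact no_red_cycle hk hac hred
  · obtain ⟨f, hf⟩ := hblue2
    have hBl : ∀ x y, H.Adj x y → s(f x, f y) ∈ B.2 ∧ f x ≠ f y := by
      intro x y hxy
      have h1 := hf x y hxy
      rwa [fromEdgeSet_adj] at h1
    have hm : H.edgeSet.toFinset.card ≤ hf2.toFinset.card := by
      apply Finset.card_le_card_of_injOn (Sym2.map f)
      · intro e he
        rw [Finset.mem_coe, Set.mem_toFinset] at he
        revert he
        refine Sym2.ind (fun x y he => ?_) e
        rw [Sym2.map_pair_eq, Finset.mem_coe, Set.Finite.mem_toFinset]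
        exact (hBl x y (H.mem_edgeSet.mp he)).1
      · exact (Sym2.map.injective f.injective).injOn
    obtain ⟨v0⟩ := hconn.nonempty
    have hreach : ∀ x : V, (fromEdgeSet B.1).Reachable (f v0) (f x) := by
      intro x
      refine images_reachable (f := f) ?_ (hconn v0 x)
      intro a c hac'
      obtain ⟨hmem, -⟩ := hBl a c hac'
      exact hblue _ hmem _ _ rfl
    have hv : Fintype.card V ≤ hf1.toFinset.card + 1 := by
      have h1 : (Finset.univ.image f).card ≤ hf1.toFinset.card + 1 := by
        apply card_le_of_reachable _ _ (f v0)
        intro x hx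
        rw [Finset.mem_image] at hx
        obtain ⟨a, -, rfl⟩ := hx
        have h2 : (↑hf1.toFinset : Set (Sym2 ℕ)) = B.1 := hf1.coe_toFinset
        rw [h2]
        exact hreach a
      rwa [Finset.card_image_of_injective _ f.injective, Finset.card_univ] at h1
    have hc1 : B.1.ncard = hf1.toFinset.card := Set.ncard_eq_toFinset_card _ hf1
    have hc2 : B.2.ncard = hf2.toFinset.card := Set.ncard_eq_toFinset_card _ hf2
    have hVpos : 1 ≤ Fintype.card V := Fintype.card_pos_iff.mpr ⟨v0⟩
    omega

lemma cycleGraph_edgeFinset_card (m : ℕ) :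
    (SimpleGraph.cycleGraph (m + 3)).edgeFinset.card = m + 3 := by
  have h := SimpleGraph.sum_degrees_eq_twice_card_edges (cycleGraph (m + 3))
  have h2 : ∀ v : Fin (m + 3), (cycleGraph (m + 3)).degree v = 2 :=
    fun v => cycleGraph_degree_three_le
  rw [Finset.sum_congr rfl (fun v _ => h2 v)] at h
  simp only [Finset.sum_const, Finset.card_univ, Fintype.card_fin, smul_eq_mul] at h
  omega

/-- Cyman–Dzido–Lapinskas–Lo lower bound: for every connected graph `H` and `k ≥ 3`,
`r̃(C_k, H) ≥ |V(H)| + |E(H)| - 1`; in particular `r̃(C_k, C_n) ≥ 2n - 1`. -/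
theorem online_ramsey_cycle_lower_bound :
    (∀ (k : ℕ), 3 ≤ k → ∀ (V : Type) (_ : Fintype V) (H : SimpleGraph V)
      (_ : DecidableRel H.Adj) (_ : Fintype H.edgeSet), H.Connected →
      ∀ b : BuilderStrat, ValidFrom b emptyBoard →
        ∃ p : PainterStrat, ∀ s : ℕ,
          s < Fintype.card V + H.edgeSet.toFinset.card - 1 →
            ¬ (RedCopy (SimpleGraph.cycleGraph k) (playGame b p emptyBoard s) ∨
               BlueCopy H (playGame b p emptyBoard s))) ∧
    (∀ k n : ℕ, 3 ≤ k → 3 ≤ n →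
      ∀ b : BuilderStrat, ValidFrom b emptyBoard →
        ∃ p : PainterStrat, ∀ s : ℕ, s < 2 * n - 1 →
          ¬ WinCC k n (playGame b p emptyBoard s)) := by
  constructor
  · intro k hk V fV H dH fE hconn b hb
    exact main_aux k hk V fV H dH fE hconn b hb
  · intro k n hk hn b hb
    obtain ⟨m, rfl⟩ : ∃ m, n = m + 3 := ⟨n - 3, by omega⟩
    have hconn : (cycleGraph (m + 3)).Connected := cycleGraph_connected (n := m + 2)
    obtain ⟨p, hp⟩ := main_aux k hk (Fin (m + 3)) inferInstance (cycleGraph (m + 3))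
      inferInstance inferInstance hconn b hb
    refine ⟨p, fun s hs hwin => ?_⟩
    have hcard : (cycleGraph (m + 3)).edgeSet.toFinset.card = m + 3 :=
      cycleGraph_edgeFinset_card m
    refine hp s ?_ hwin
    rw [hcard, Fintype.card_fin]
    omega
end

section
/- Triangle inequality for online Ramsey games: for any graphs F, G, H and any colored graph C already on the board, r̃_C(G,H) ≤ r̃_C(G,F) + r̃_{F_b}(G,H), where F_b denotes a blue copy of F. In particular, with empty initial board, r̃(G,H) ≤ r̃(G,F) + r̃_{F_b}(G,H). -/
open SimpleGraph

/-- The online Ramsey number (possibly `⊤` if Builder cannot win) of the game with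
initial board `init` and winning condition `W`. -/
noncomputable def rtilde (init : Board) (W : Board → Prop) : ℕ∞ :=
  sInf {m : ℕ∞ | ∃ t : ℕ, BuilderWinsIn init W t ∧ m = (t : ℕ∞)}

/-- The board consisting of a blue copy of `F` (on the canonical vertices). -/
def blueGraphBoard {m : ℕ} (F : SimpleGraph (Fin m)) : Board :=
  (∅, {e | ∃ i j : Fin m, F.Adj i j ∧ e = s((i : ℕ), (j : ℕ))})

noncomputable section OnlineRamseyAux
open scoped Classical

namespace ORTri

variable {b : BuilderStrat} {p q q' : PainterStrat} {init : Board}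

lemma playGame_succ (b : BuilderStrat) (p : PainterStrat) (init : Board) (t : ℕ) :
    playGame b p init (t + 1) =
      if p (playGame b p init t) (b (playGame b p init t)) then
        (insert (b (playGame b p init t)) (playGame b p init t).1, (playGame b p init t).2)
      else
        ((playGame b p init t).1, insert (b (playGame b p init t)) (playGame b p init t).2) := rfl

lemma colored_succ (b : BuilderStrat) (p : PainterStrat) (init : Board) (t : ℕ) :
    (playGame b p init (t + 1)).colored
      = insert (b (playGame b p init t)) (playGame b p init t).colored := by
  rw [playGame_succ]
  split
  · simp [Board.colored, Set.insert_union]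
  · simp [Board.colored, Set.union_insert]

lemma pg_mono1 {u t : ℕ} (h : u ≤ t) :
    (playGame b p init u).1 ⊆ (playGame b p init t).1 := by
  induction t, h using Nat.le_induction with
  | base => exact subset_rfl
  | succ t ht ih =>
      refine ih.trans ?_
      rw [playGame_succ]
      split
      · exact Set.subset_insert _ _
      · exact subset_rfl

lemma pg_mono2 {u t : ℕ} (h : u ≤ t) :
    (playGame b p init u).2 ⊆ (playGame b p init t).2 := by
  induction t, h using Nat.le_induction with
  | base => exact subset_rfl
  | succ t ht ih =>
      refine ih.trans ?_
      rw [playGame_succ]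
      split
      · exact subset_rfl
      · exact Set.subset_insert _ _

lemma pg_mono_colored {u t : ℕ} (h : u ≤ t) :
    (playGame b p init u).colored ⊆ (playGame b p init t).colored :=
  Set.union_subset_union (pg_mono1 h) (pg_mono2 h)

lemma mem_colored_of_play {t : ℕ} :
    b (playGame b p init t) ∈ (playGame b p init (t + 1)).colored := by
  rw [colored_succ]; exact Set.mem_insert _ _

/-- Memberships of already-colored edges are stable under later fresh plays. -/
lemma mem_stable {t : ℕ}
    (hfr : ∀ s, s < t → b (playGame b p init s) ∉ (playGame b p init s).colored)
    {u : ℕ} (hu : u ≤ t) {e : Sym2 ℕ} (he : e ∈ (playGame b p init u).colored) :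
    ((e ∈ (playGame b p init t).1) ↔ e ∈ (playGame b p init u).1) ∧
      ((e ∈ (playGame b p init t).2) ↔ e ∈ (playGame b p init u).2) := by
  induction t, hu using Nat.le_induction with
  | base => exact ⟨Iff.rfl, Iff.rfl⟩
  | succ t ht ih =>
      have ih' := ih (fun s hs => hfr s (Nat.lt_succ_of_lt hs))
      have hne : b (playGame b p init t) ≠ e := by
        intro hEq
        exact hfr t (Nat.lt_succ_self t) (hEq ▸ pg_mono_colored ht he)
      rw [playGame_succ]
      split
      · simpa [Set.mem_insert_iff, hne.symm] using ih'
      · simpa [Set.mem_insert_iff, hne.symm] using ih'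

/-- Two painters that agree along a play produce the same play. -/
lemma playGame_congr {n : ℕ}
    (h : ∀ s, s < n → q' (playGame b q init s) (b (playGame b q init s))
          = q (playGame b q init s) (b (playGame b q init s))) :
    playGame b q' init n = playGame b q init n := by
  induction n with
  | zero => rfl
  | succ n ih =>
      have ih' := ih (fun s hs => h s (Nat.lt_succ_of_lt hs))
      rw [playGame_succ, playGame_succ, ih', h n (Nat.lt_succ_self n)]

/-- Read back the painter's color from a later board. -/
lemma readback {t u : ℕ}
    (hfr : ∀ s, s < t → b (playGame b p init s) ∉ (playGame b p init s).colored)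
    (hut : u < t) :
    (b (playGame b p init u) ∈ (playGame b p init t).1)
      ↔ p (playGame b p init u) (b (playGame b p init u)) = true := by
  set e := b (playGame b p init u) with he
  have hfru : e ∉ (playGame b p init u).colored := hfr u hut
  by_cases hc : p (playGame b p init u) e = true
  · have : e ∈ (playGame b p init (u + 1)).1 := by
      rw [playGame_succ, ← he, if_pos hc]; exact Set.mem_insert _ _
    simp [hc, pg_mono1 hut this]
  · have h1 : e ∉ (playGame b p init (u + 1)).1 := by
      rw [playGame_succ, ← he, if_neg hc]
      exact fun hmem => hfru (Or.inl hmem)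
    have := (mem_stable hfr hut (mem_colored_of_play)).1
    rw [← he] at this
    simp only [Bool.not_eq_true] at hc
    simp only [hc]
    constructor
    · exact fun hm => absurd (this.mp hm) h1
    · intro hfalse; exact absurd hfalse (by simp)


/-- Painter that answers according to membership in the red part of a reference board. -/
def memPainter (B : Board) : PainterStrat := fun _ e => decide (e ∈ B.1)

/-- Painter that answers according to membership of the `φ`-image in the red part of `B`. -/
def mapPainter (φ : ℕ → ℕ) (B : Board) : PainterStrat :=
  fun _ e => decide (Sym2.map φ e ∈ B.1)

/-- A fallback fresh edge, when one exists. -/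
def fallback (B : Board) : Sym2 ℕ :=
  if h : ∃ e : Sym2 ℕ, ¬ e.IsDiag ∧ e ∉ B.colored then h.choose else s(0, 1)

lemma fallback_spec {B : Board} (h : ∃ e : Sym2 ℕ, ¬ e.IsDiag ∧ e ∉ B.colored) :
    ¬ (fallback B).IsDiag ∧ fallback B ∉ B.colored := by
  rw [fallback, dif_pos h]; exact h.choose_spec

/-- There is a blue copy of `F` in `D` (in embedding form). -/
def phiCond {m : ℕ} (F : SimpleGraph (Fin m)) (D : Board) : Prop :=
  ∃ g : Fin m ↪ ℕ, ∀ i j : Fin m, F.Adj i j → s(g i, g j) ∈ D.2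

/-- An injection `ℕ → ℕ` extending a blue copy of `F` in `D` (if any). -/
def phiOf {m : ℕ} (F : SimpleGraph (Fin m)) (D : Board) : ℕ → ℕ :=
  if h : phiCond F D then
    fun n => if hn : n < m then h.choose ⟨n, hn⟩
      else (((Set.finite_range (fun i => h.choose i)).infinite_compl.natEmbedding) (n - m)).val
  else id

lemma phiOf_inj {m : ℕ} {F : SimpleGraph (Fin m)} {D : Board} :
    Function.Injective (phiOf F D) := by
  by_cases h : phiCond F D
  · intro a c hac
    simp only [phiOf, dif_pos h] at hac
    by_cases ha : a < m <;> by_cases hc : c < m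
    · rw [dif_pos ha, dif_pos hc] at hac
      have := h.choose.injective hac
      simpa [Fin.mk.injEq] using this
    · rw [dif_pos ha, dif_neg hc] at hac
      exact absurd ⟨_, hac⟩
        ((((Set.finite_range (fun i => h.choose i)).infinite_compl.natEmbedding) (c - m)).2)
    · rw [dif_neg ha, dif_pos hc] at hac
      exact absurd ⟨_, hac.symm⟩
        ((((Set.finite_range (fun i => h.choose i)).infinite_compl.natEmbedding) (a - m)).2)
    · rw [dif_neg ha, dif_neg hc] at hac
      have := ((Set.finite_range (fun i => h.choose i)).infinite_compl.natEmbedding).injective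
        (Subtype.coe_injective hac)
      omega
  · simp only [phiOf, dif_neg h]
    exact fun a b hab => hab

lemma phiOf_lt {m : ℕ} {F : SimpleGraph (Fin m)} {D : Board} (h : phiCond F D) (i : Fin m) :
    phiOf F D (i : ℕ) = h.choose i := by
  simp only [phiOf, dif_pos h, dif_pos i.isLt, Fin.eta]

lemma phiOf_blue {m : ℕ} {F : SimpleGraph (Fin m)} {D : Board} (h : phiCond F D)
    {i j : Fin m} (hadj : F.Adj i j) :
    s(phiOf F D (i : ℕ), phiOf F D (j : ℕ)) ∈ D.2 := by
  rw [phiOf_lt h i, phiOf_lt h j]; exact h.choose_spec i j hadj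

lemma blueCopy_phiCond {m : ℕ} {F : SimpleGraph (Fin m)} {D : Board}
    (h : BlueCopy F D) : phiCond F D := by
  obtain ⟨f, hf⟩ := h
  exact ⟨f, fun i j ha => ((SimpleGraph.fromEdgeSet_adj _).mp (hf i j ha)).1⟩

lemma map_notDiag {φ : ℕ → ℕ} (hφ : Function.Injective φ) {e : Sym2 ℕ}
    (he : ¬ e.IsDiag) : ¬ (Sym2.map φ e).IsDiag := by
  induction e using Sym2.ind with
  | _ x y =>
      rw [Sym2.map_pair_eq, Sym2.mk_isDiag_iff] at *
      exact fun hxy => he (hφ hxy)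

lemma hasCopy_map {α : Type} (K : SimpleGraph α) {S S' : Set (Sym2 ℕ)} (φ : ℕ ↪ ℕ)
    (hS : ∀ e ∈ S, Sym2.map φ e ∈ S') (h : HasCopy K (fromEdgeSet S)) :
    HasCopy K (fromEdgeSet S') := by
  obtain ⟨e0, h0⟩ := h
  refine ⟨e0.trans φ, fun x y ha => ?_⟩
  have h1 := (SimpleGraph.fromEdgeSet_adj _).mp (h0 x y ha)
  simp only [Function.Embedding.trans_apply]
  refine (SimpleGraph.fromEdgeSet_adj _).mpr ⟨?_, fun hEq => h1.2 (φ.injective hEq)⟩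
  have := hS _ h1.1
  rwa [Sym2.map_pair_eq] at this

/-- Simulating a second-phase game translated along `φ`. -/
def comb2 {m : ℕ} (b2 : BuilderStrat) (F : SimpleGraph (Fin m)) (φ : ℕ → ℕ) (B : Board) :
    Sym2 ℕ :=
  if h2 : ∃ u, Sym2.map φ (b2 (playGame b2 (mapPainter φ B) (blueGraphBoard F) u)) ∉ B.colored
  then Sym2.map φ (b2 (playGame b2 (mapPainter φ B) (blueGraphBoard F) (Nat.find h2)))
  else fallback B

/-- The combined strategy. -/
def comb (b1 b2 : BuilderStrat) (W1 : Board → Prop) {m : ℕ} (F : SimpleGraph (Fin m))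
    (C : Board) (B : Board) : Sym2 ℕ :=
  if h1 : ∃ s, W1 (playGame b1 (memPainter B) C s) ∨
      b1 (playGame b1 (memPainter B) C s) ∉ B.colored then
    if W1 (playGame b1 (memPainter B) C (Nat.find h1)) then
      comb2 b2 F (phiOf F (playGame b1 (memPainter B) C (Nat.find h1))) B
    else b1 (playGame b1 (memPainter B) C (Nat.find h1))
  else fallback B

lemma readback_decide {b : BuilderStrat} {p : PainterStrat} {init : Board} {t u : ℕ}
    (hfr : ∀ s, s < t → b (playGame b p init s) ∉ (playGame b p init s).colored)
    (hut : u < t) :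
    decide (b (playGame b p init u) ∈ (playGame b p init t).1)
      = p (playGame b p init u) (b (playGame b p init u)) := by
  have hrb := readback hfr hut
  rcases Bool.eq_false_or_eq_true (p (playGame b p init u) (b (playGame b p init u))) with hb | hb
  · rw [hb]
    exact decide_eq_true (hrb.mpr hb)
  · rw [hb]
    apply decide_eq_false
    intro hmem
    have := hrb.mp hmem
    rw [hb] at this
    exact Bool.false_ne_true this

lemma colored_sub (b : BuilderStrat) (p : PainterStrat) (init : Board) :
    ∀ t, (playGame b p init t).colored ⊆
      init.colored ∪ ↑((Finset.range t).image fun u => b (playGame b p init u)) := by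
  intro t
  induction t with
  | zero => exact fun e he => Set.mem_union_left _ he
  | succ t ih =>
      rw [colored_succ]
      intro e he
      rcases Set.mem_insert_iff.mp he with rfl | he'
      · right
        simp only [Finset.coe_image, Set.mem_image, Finset.mem_coe, Finset.mem_range]
        exact ⟨t, Nat.lt_succ_self t, rfl⟩
      · rcases ih he' with hC | hplayed
        · exact Or.inl hC
        · right
          simp only [Finset.coe_image, Set.mem_image, Finset.mem_coe, Finset.mem_range] at hplayed ⊢
          obtain ⟨u, hu, rfl⟩ := hplayed
          exact ⟨u, Nat.lt_succ_of_lt hu, rfl⟩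

section Main

variable {b1 b2 : BuilderStrat} {W1 : Board → Prop} {mm : ℕ} {F : SimpleGraph (Fin mm)}
  {C : Board} {p : PainterStrat}

/-- Any board reachable by any strategy from `C` misses some non-loop edge,
provided some strategy is valid from `C`. -/
lemma exists_fresh (hv1 : ValidFrom b1 C) (b : BuilderStrat) (p : PainterStrat) (t : ℕ) :
    ∃ e : Sym2 ℕ, ¬ e.IsDiag ∧ e ∉ (playGame b p C t).colored := by
  classical
  set pT : PainterStrat := fun _ _ => true with hpT
  set ε : ℕ → Sym2 ℕ := fun s => b1 (playGame b1 pT C s) with hε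
  have hnd : ∀ s, ¬ (ε s).IsDiag := fun s => (hv1 pT s).1
  have hfr : ∀ s, ε s ∉ (playGame b1 pT C s).colored := fun s => (hv1 pT s).2
  have hnC : ∀ s, ε s ∉ C.colored := fun s hC => hfr s (pg_mono_colored (Nat.zero_le s) hC)
  have hinj : ∀ s' s : ℕ, s' < s → ε s' ≠ ε s := by
    intro s' s hlt hEq
    exact hfr s (hEq ▸ pg_mono_colored (Nat.succ_le_of_lt hlt) mem_colored_of_play)
  by_contra hno
  push_neg at hno
  have hsub : (Finset.range (t + 1)).image ε ⊆
      (Finset.range t).image (fun u => b (playGame b p C u)) := by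
    intro e he
    simp only [Finset.mem_image, Finset.mem_range] at he ⊢
    obtain ⟨s, _, rfl⟩ := he
    have hcol := hno (ε s) (hnd s)
    rcases colored_sub b p C t hcol with hC | hplayed
    · exact absurd hC (hnC s)
    · simpa using hplayed
  have hinjOn : Set.InjOn ε ↑(Finset.range (t + 1)) := by
    intro a _ c _ hac
    rcases lt_trichotomy a c with hlt | hEq | hgt
    · exact absurd hac (hinj a c hlt)
    · exact hEq
    · exact absurd hac.symm (hinj c a hgt)
  have hcard : t + 1 ≤ t := by
    calc t + 1 = ((Finset.range (t + 1)).image ε).card := by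
            rw [Finset.card_image_of_injOn hinjOn, Finset.card_range]
      _ ≤ ((Finset.range t).image (fun u => b (playGame b p C u))).card :=
            Finset.card_le_card hsub
      _ ≤ t := le_trans Finset.card_image_le (by simp)
  omega

/-- Phase 1 evaluation of the combined strategy. -/
lemma eval1 (hv1 : ValidFrom b1 C) {T s : ℕ}
    (hTmin : ∀ s', s' < T → ¬ W1 (playGame b1 p C s')) (hsT : s < T)
    (hRs : playGame (comb b1 b2 W1 F C) p C s = playGame b1 p C s) :
    comb b1 b2 W1 F C (playGame (comb b1 b2 W1 F C) p C s) = b1 (playGame b1 p C s) := by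
  rw [hRs]
  have hagree : ∀ s', s' ≤ s →
      playGame b1 (memPainter (playGame b1 p C s)) C s' = playGame b1 p C s' := by
    intro s' hs'
    apply playGame_congr
    intro u hu
    show decide (b1 (playGame b1 p C u) ∈ (playGame b1 p C s).1)
        = p (playGame b1 p C u) (b1 (playGame b1 p C u))
    exact readback_decide (fun s'' _ => (hv1 p s'').2) (lt_of_lt_of_le hu hs')
  have hex : ∃ s', W1 (playGame b1 (memPainter (playGame b1 p C s)) C s') ∨
      b1 (playGame b1 (memPainter (playGame b1 p C s)) C s')
        ∉ (playGame b1 p C s).colored :=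
    ⟨s, Or.inr (by rw [hagree s le_rfl]; exact (hv1 p s).2)⟩
  rw [comb, dif_pos hex]
  have hfind : Nat.find hex = s := by
    rw [Nat.find_eq_iff]
    refine ⟨Or.inr (by rw [hagree s le_rfl]; exact (hv1 p s).2), ?_⟩
    intro s' hs'
    rw [hagree s' (le_of_lt hs')]
    push_neg
    refine ⟨hTmin s' (lt_trans hs' hsT), ?_⟩
    exact pg_mono_colored (Nat.succ_le_of_lt hs') mem_colored_of_play
  rw [hfind, hagree s le_rfl, if_neg (hTmin s hsT)]

/-- Phase 1 boards of the combined play agree with the `b1`-play. -/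
lemma phase1_boards (hv1 : ValidFrom b1 C) {T : ℕ}
    (hTmin : ∀ s', s' < T → ¬ W1 (playGame b1 p C s')) :
    ∀ s, s ≤ T → playGame (comb b1 b2 W1 F C) p C s = playGame b1 p C s := by
  intro s
  induction s with
  | zero => intro _; rfl
  | succ s ih =>
      intro hsT
      have hRs := ih (le_trans (Nat.le_succ s) hsT)
      have hcbs := eval1 hv1 hTmin (Nat.lt_of_succ_le hsT) hRs
      rw [playGame_succ (comb b1 b2 W1 F C) p C s, playGame_succ b1 p C s, hcbs, hRs]

/-- Phase 2 evaluation of the combined strategy. -/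
lemma eval2 (hv1 : ValidFrom b1 C) {T t : ℕ}
    (hTmin : ∀ s', s' < T → ¬ W1 (playGame b1 p C s'))
    (hWT : W1 (playGame b1 p C T)) (htT : T ≤ t)
    (hFr : ∀ u, u < t → comb b1 b2 W1 F C (playGame (comb b1 b2 W1 F C) p C u)
        ∉ (playGame (comb b1 b2 W1 F C) p C u).colored) :
    comb b1 b2 W1 F C (playGame (comb b1 b2 W1 F C) p C t)
      = comb2 b2 F (phiOf F (playGame b1 p C T)) (playGame (comb b1 b2 W1 F C) p C t) := by
  have hRP : ∀ s, s ≤ T → playGame (comb b1 b2 W1 F C) p C s = playGame b1 p C s :=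
    phase1_boards hv1 hTmin
  have hagree : ∀ s, s ≤ T →
      playGame b1 (memPainter (playGame (comb b1 b2 W1 F C) p C t)) C s
        = playGame b1 p C s := by
    intro s hs
    apply playGame_congr
    intro u hu
    have huT : u < T := lt_of_lt_of_le hu hs
    have hcbu := eval1 (b2 := b2) (F := F) hv1 hTmin huT (hRP u (le_of_lt huT))
    show decide (b1 (playGame b1 p C u) ∈ (playGame (comb b1 b2 W1 F C) p C t).1)
        = p (playGame b1 p C u) (b1 (playGame b1 p C u))
    have hd := readback_decide (b := comb b1 b2 W1 F C) (p := p) (init := C)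
      (fun s'' hs'' => hFr s'' hs'') (lt_of_lt_of_le huT htT)
    rw [hcbu, hRP u (le_of_lt huT)] at hd
    exact hd
  have hex : ∃ s, W1 (playGame b1 (memPainter (playGame (comb b1 b2 W1 F C) p C t)) C s) ∨
      b1 (playGame b1 (memPainter (playGame (comb b1 b2 W1 F C) p C t)) C s)
        ∉ (playGame (comb b1 b2 W1 F C) p C t).colored :=
    ⟨T, Or.inl (by rw [hagree T le_rfl]; exact hWT)⟩
  rw [comb, dif_pos hex]
  have hfind : Nat.find hex = T := by
    rw [Nat.find_eq_iff]
    refine ⟨Or.inl (by rw [hagree T le_rfl]; exact hWT), ?_⟩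
    intro s' hs'
    rw [hagree s' (le_of_lt hs')]
    push_neg
    refine ⟨hTmin s' hs', ?_⟩
    have hcbs' := eval1 (b2 := b2) (F := F) hv1 hTmin hs' (hRP s' (le_of_lt hs'))
    rw [← hcbs']
    exact pg_mono_colored (Nat.succ_le_of_lt (lt_of_lt_of_le hs' htT)) mem_colored_of_play
  rw [hfind, hagree T le_rfl, if_pos hWT]

/-- The combined strategy is valid. -/
lemma valid_main (hv1 : ValidFrom b1 C) (hv2 : ValidFrom b2 (blueGraphBoard F)) {T : ℕ}
    (hTmin : ∀ s', s' < T → ¬ W1 (playGame b1 p C s'))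
    (hWT : W1 (playGame b1 p C T)) :
    ∀ t, ¬ (comb b1 b2 W1 F C (playGame (comb b1 b2 W1 F C) p C t)).IsDiag ∧
      comb b1 b2 W1 F C (playGame (comb b1 b2 W1 F C) p C t)
        ∉ (playGame (comb b1 b2 W1 F C) p C t).colored := by
  intro t
  induction t using Nat.strong_induction_on with
  | _ t IH =>
  have hFr : ∀ u, u < t → comb b1 b2 W1 F C (playGame (comb b1 b2 W1 F C) p C u)
      ∉ (playGame (comb b1 b2 W1 F C) p C u).colored := fun u hu => (IH u hu).2
  by_cases htT : t < T
  · have hRt := phase1_boards (b2 := b2) (F := F) hv1 hTmin t (le_of_lt htT)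
    rw [eval1 hv1 hTmin htT hRt, hRt]
    exact hv1 p t
  · push_neg at htT
    rw [eval2 hv1 hTmin hWT htT hFr]
    rw [comb2]
    by_cases h2 : ∃ u, Sym2.map (phiOf F (playGame b1 p C T))
        (b2 (playGame b2 (mapPainter (phiOf F (playGame b1 p C T))
          (playGame (comb b1 b2 W1 F C) p C t)) (blueGraphBoard F) u))
        ∉ (playGame (comb b1 b2 W1 F C) p C t).colored
    · rw [dif_pos h2]
      exact ⟨map_notDiag phiOf_inj
        (hv2 (mapPainter (phiOf F (playGame b1 p C T))
          (playGame (comb b1 b2 W1 F C) p C t)) (Nat.find h2)).1,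
        Nat.find_spec h2⟩
    · rw [dif_neg h2]
      exact fallback_spec (exists_fresh hv1 _ p t)

end Main

section Phase2

variable {b2 : BuilderStrat} {mm : ℕ} {F : SimpleGraph (Fin mm)}

/-- Colors of the simulated second-phase game transfer, through `φ`, to the real board. -/
lemma transfer {D B : Board} (hc : phiCond F D) (hD2 : D.2 ⊆ B.2) (u : ℕ)
    (himg : ∀ u', u' < u → Sym2.map (phiOf F D)
        (b2 (playGame b2 (mapPainter (phiOf F D) B) (blueGraphBoard F) u')) ∈ B.colored) :
    (∀ e ∈ (playGame b2 (mapPainter (phiOf F D) B) (blueGraphBoard F) u).1,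
        Sym2.map (phiOf F D) e ∈ B.1) ∧
    (∀ e ∈ (playGame b2 (mapPainter (phiOf F D) B) (blueGraphBoard F) u).2,
        Sym2.map (phiOf F D) e ∈ B.2) := by
  induction u with
  | zero =>
      constructor
      · intro e he
        exact absurd he (Set.notMem_empty e)
      · intro e he
        obtain ⟨i, j, hadj, rfl⟩ : ∃ i j : Fin mm, F.Adj i j ∧ e = s((i : ℕ), (j : ℕ)) := he
        rw [Sym2.map_pair_eq]
        exact hD2 (phiOf_blue hc hadj)
  | succ u ih =>
      have ih' := ih (fun u' hu' => himg u' (Nat.lt_succ_of_lt hu'))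
      rw [playGame_succ]
      rcases Bool.eq_false_or_eq_true (mapPainter (phiOf F D) B
          (playGame b2 (mapPainter (phiOf F D) B) (blueGraphBoard F) u)
          (b2 (playGame b2 (mapPainter (phiOf F D) B) (blueGraphBoard F) u))) with hb | hb
      · rw [if_pos hb]
        constructor
        · intro e he
          rcases Set.mem_insert_iff.mp he with rfl | he'
          · exact of_decide_eq_true hb
          · exact ih'.1 e he'
        · exact ih'.2
      · rw [if_neg (by simp [hb])]
        constructor
        · exact ih'.1
        · intro e he
          rcases Set.mem_insert_iff.mp he with rfl | he'
          · have hcol := himg u (Nat.lt_succ_self u)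
            have hnot1 : Sym2.map (phiOf F D)
                (b2 (playGame b2 (mapPainter (phiOf F D) B) (blueGraphBoard F) u)) ∉ B.1 := by
              intro hmem
              have : mapPainter (phiOf F D) B
                  (playGame b2 (mapPainter (phiOf F D) B) (blueGraphBoard F) u)
                  (b2 (playGame b2 (mapPainter (phiOf F D) B) (blueGraphBoard F) u)) = true :=
                decide_eq_true hmem
              rw [hb] at this
              exact Bool.false_ne_true this
            rcases hcol with h1 | h2
            · exact absurd h1 hnot1
            · exact h2
          · exact ih'.2 e he'

/-- A win of the simulated game transfers to the real board. -/
lemma winAt {g h : ℕ} {G : SimpleGraph (Fin g)} {H : SimpleGraph (Fin h)} {t2 : ℕ}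
    {D B : Board} (hc : phiCond F D) (hD2 : D.2 ⊆ B.2)
    (hw2 : ∃ u, u ≤ t2 ∧
      (RedCopy G (playGame b2 (mapPainter (phiOf F D) B) (blueGraphBoard F) u) ∨
       BlueCopy H (playGame b2 (mapPainter (phiOf F D) B) (blueGraphBoard F) u)))
    (himg : ∀ u', u' < t2 → Sym2.map (phiOf F D)
        (b2 (playGame b2 (mapPainter (phiOf F D) B) (blueGraphBoard F) u')) ∈ B.colored) :
    RedCopy G B ∨ BlueCopy H B := by
  obtain ⟨u, hu, hw⟩ := hw2
  have htr := transfer hc hD2 u (fun u' hu' => himg u' (lt_of_lt_of_le hu' hu))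
  rcases hw with hred | hblue
  · exact Or.inl (hasCopy_map G ⟨phiOf F D, phiOf_inj⟩ (fun e he => htr.1 e he) hred)
  · exact Or.inr (hasCopy_map H ⟨phiOf F D, phiOf_inj⟩ (fun e he => htr.2 e he) hblue)

/-- The simulated game is stable under one fresh real move, up to the first fresh image. -/
lemma Vagree {b : BuilderStrat} {p : PainterStrat} {C : Board} {t : ℕ} {φ : ℕ → ℕ}
    (hFr : ∀ u, u < t + 1 → b (playGame b p C u) ∉ (playGame b p C u).colored)
    (hx : ∃ u, Sym2.map φ
        (b2 (playGame b2 (mapPainter φ (playGame b p C t)) (blueGraphBoard F) u))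
        ∉ (playGame b p C t).colored) :
    ∀ u, u ≤ Nat.find hx →
      playGame b2 (mapPainter φ (playGame b p C (t + 1))) (blueGraphBoard F) u
        = playGame b2 (mapPainter φ (playGame b p C t)) (blueGraphBoard F) u := by
  intro u hu
  apply playGame_congr
  intro u' hu'
  have hcol : Sym2.map φ
      (b2 (playGame b2 (mapPainter φ (playGame b p C t)) (blueGraphBoard F) u'))
      ∈ (playGame b p C t).colored := by
    by_contra hq
    exact Nat.find_min hx (lt_of_lt_of_le hu' hu) hq
  show decide (Sym2.map φ
      (b2 (playGame b2 (mapPainter φ (playGame b p C t)) (blueGraphBoard F) u'))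
      ∈ (playGame b p C (t + 1)).1) = decide (Sym2.map φ
      (b2 (playGame b2 (mapPainter φ (playGame b p C t)) (blueGraphBoard F) u'))
      ∈ (playGame b p C t).1)
  exact decide_eq_decide.mpr ((mem_stable hFr (Nat.le_succ t) hcol).1)

end Phase2

lemma key_all {g h mm : ℕ} {G : SimpleGraph (Fin g)} {H : SimpleGraph (Fin h)}
    {F : SimpleGraph (Fin mm)} {C : Board} {b1 b2 : BuilderStrat} {t1 t2 : ℕ}
    (hv1 : ValidFrom b1 C) (hv2 : ValidFrom b2 (blueGraphBoard F))
    (hw1 : ∀ q : PainterStrat, ∃ s, s ≤ t1 ∧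
      (RedCopy G (playGame b1 q C s) ∨ BlueCopy F (playGame b1 q C s)))
    (hw2 : ∀ q : PainterStrat, ∃ s, s ≤ t2 ∧
      (RedCopy G (playGame b2 q (blueGraphBoard F) s) ∨
        BlueCopy H (playGame b2 q (blueGraphBoard F) s)))
    (p : PainterStrat) :
    (∀ t, ¬ ((comb b1 b2 (fun B => RedCopy G B ∨ BlueCopy F B) F C) (playGame (comb b1 b2 (fun B => RedCopy G B ∨ BlueCopy F B) F C) p C t)).IsDiag ∧
        (comb b1 b2 (fun B => RedCopy G B ∨ BlueCopy F B) F C) (playGame (comb b1 b2 (fun B => RedCopy G B ∨ BlueCopy F B) F C) p C t) ∉ (playGame (comb b1 b2 (fun B => RedCopy G B ∨ BlueCopy F B) F C) p C t).colored) ∧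
      (∃ s, s ≤ t1 + t2 ∧
        (RedCopy G (playGame (comb b1 b2 (fun B => RedCopy G B ∨ BlueCopy F B) F C) p C s) ∨ BlueCopy H (playGame (comb b1 b2 (fun B => RedCopy G B ∨ BlueCopy F B) F C) p C s))) := by
  have hT0 : ∃ s, RedCopy G (playGame b1 p C s) ∨ BlueCopy F (playGame b1 p C s) := by
    obtain ⟨s, _, hs⟩ := hw1 p
    exact ⟨s, hs⟩
  have hTle : (Nat.find hT0) ≤ t1 := by
    obtain ⟨s, hsle, hs⟩ := hw1 p
    exact le_trans (Nat.find_le hs) hsle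
  have hWT : RedCopy G (playGame b1 p C (Nat.find hT0)) ∨ BlueCopy F (playGame b1 p C (Nat.find hT0)) :=
    Nat.find_spec hT0
  have hTmin : ∀ s', s' < (Nat.find hT0) →
      ¬ (RedCopy G (playGame b1 p C s') ∨ BlueCopy F (playGame b1 p C s')) :=
    fun s' hs' => Nat.find_min hT0 hs'
  have hval : ∀ t, ¬ ((comb b1 b2 (fun B => RedCopy G B ∨ BlueCopy F B) F C) (playGame (comb b1 b2 (fun B => RedCopy G B ∨ BlueCopy F B) F C) p C t)).IsDiag ∧
      (comb b1 b2 (fun B => RedCopy G B ∨ BlueCopy F B) F C) (playGame (comb b1 b2 (fun B => RedCopy G B ∨ BlueCopy F B) F C) p C t) ∉ (playGame (comb b1 b2 (fun B => RedCopy G B ∨ BlueCopy F B) F C) p C t).colored :=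
    valid_main hv1 hv2 hTmin hWT
  refine ⟨hval, ?_⟩
  have hFrAll : ∀ u, (comb b1 b2 (fun B => RedCopy G B ∨ BlueCopy F B) F C) (playGame (comb b1 b2 (fun B => RedCopy G B ∨ BlueCopy F B) F C) p C u) ∉ (playGame (comb b1 b2 (fun B => RedCopy G B ∨ BlueCopy F B) F C) p C u).colored :=
    fun u => (hval u).2
  have hRT : playGame (comb b1 b2 (fun B => RedCopy G B ∨ BlueCopy F B) F C) p C (Nat.find hT0) = playGame b1 p C (Nat.find hT0) :=
    phase1_boards hv1 hTmin (Nat.find hT0) le_rfl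
  rcases hWT with hred | hblue
  · refine ⟨(Nat.find hT0), le_trans hTle (Nat.le_add_right _ _), ?_⟩
    rw [hRT]
    exact Or.inl hred
  · have hWT2 : RedCopy G (playGame b1 p C (Nat.find hT0)) ∨ BlueCopy F (playGame b1 p C (Nat.find hT0)) :=
      Or.inr hblue
    have hc : phiCond F (playGame b1 p C (Nat.find hT0)) := blueCopy_phiCond hblue
    have hD2 : ∀ t, (Nat.find hT0) ≤ t →
        (playGame b1 p C (Nat.find hT0)).2 ⊆ (playGame (comb b1 b2 (fun B => RedCopy G B ∨ BlueCopy F B) F C) p C t).2 := by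
      intro t ht
      rw [← hRT]
      exact pg_mono2 ht
    have prog : ∀ k, k ≤ t2 →
        (∃ s, s ≤ t1 + t2 ∧
          (RedCopy G (playGame (comb b1 b2 (fun B => RedCopy G B ∨ BlueCopy F B) F C) p C s) ∨ BlueCopy H (playGame (comb b1 b2 (fun B => RedCopy G B ∨ BlueCopy F B) F C) p C s))) ∨
        ∃ hx : (∃ u, Sym2.map (phiOf F (playGame b1 p C (Nat.find hT0))) (b2 (playGame b2 (mapPainter (phiOf F (playGame b1 p C (Nat.find hT0)))
            (playGame (comb b1 b2 (fun B => RedCopy G B ∨ BlueCopy F B) F C) p C ((Nat.find hT0) + k))) (blueGraphBoard F) u))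
            ∉ (playGame (comb b1 b2 (fun B => RedCopy G B ∨ BlueCopy F B) F C) p C ((Nat.find hT0) + k)).colored), k ≤ Nat.find hx := by
      intro k
      induction k with
      | zero =>
          intro _
          simp only [Nat.add_zero]
          by_cases hx : ∃ u, Sym2.map (phiOf F (playGame b1 p C (Nat.find hT0))) (b2 (playGame b2 (mapPainter (phiOf F (playGame b1 p C (Nat.find hT0)))
              (playGame (comb b1 b2 (fun B => RedCopy G B ∨ BlueCopy F B) F C) p C (Nat.find hT0))) (blueGraphBoard F) u))
              ∉ (playGame (comb b1 b2 (fun B => RedCopy G B ∨ BlueCopy F B) F C) p C (Nat.find hT0)).colored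
          · exact Or.inr ⟨hx, Nat.zero_le _⟩
          · push_neg at hx
            exact Or.inl ⟨(Nat.find hT0), le_trans hTle (Nat.le_add_right _ _),
              winAt hc (hD2 (Nat.find hT0) le_rfl) (hw2 _) (fun u' _ => hx _)⟩
      | succ k ih =>
          intro hk1
          rcases ih (le_trans (Nat.le_succ k) hk1) with hwin | ⟨hx, hkfind⟩
          · exact Or.inl hwin
          · have htT : (Nat.find hT0) ≤ (Nat.find hT0) + k := Nat.le_add_right _ _
            have hcbt : (comb b1 b2 (fun B => RedCopy G B ∨ BlueCopy F B) F C) (playGame (comb b1 b2 (fun B => RedCopy G B ∨ BlueCopy F B) F C) p C ((Nat.find hT0) + k)) = Sym2.map (phiOf F (playGame b1 p C (Nat.find hT0)))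
                (b2 (playGame b2 (mapPainter (phiOf F (playGame b1 p C (Nat.find hT0))) (playGame (comb b1 b2 (fun B => RedCopy G B ∨ BlueCopy F B) F C) p C ((Nat.find hT0) + k)))
                  (blueGraphBoard F) (Nat.find hx))) := by
              rw [eval2 hv1 hTmin hWT2 htT (fun u hu => hFrAll u), comb2, dif_pos hx]
            have hVag := Vagree (b := (comb b1 b2 (fun B => RedCopy G B ∨ BlueCopy F B) F C)) (p := p) (C := C) (t := (Nat.find hT0) + k)
              (φ := (phiOf F (playGame b1 p C (Nat.find hT0)))) (fun u _ => hFrAll u) hx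
            simp only [← Nat.add_assoc]
            by_cases hx' : ∃ u, Sym2.map (phiOf F (playGame b1 p C (Nat.find hT0))) (b2 (playGame b2 (mapPainter (phiOf F (playGame b1 p C (Nat.find hT0)))
                (playGame (comb b1 b2 (fun B => RedCopy G B ∨ BlueCopy F B) F C) p C ((Nat.find hT0) + k + 1))) (blueGraphBoard F) u))
                ∉ (playGame (comb b1 b2 (fun B => RedCopy G B ∨ BlueCopy F B) F C) p C ((Nat.find hT0) + k + 1)).colored
            · refine Or.inr ⟨hx', ?_⟩
              rw [Nat.le_find_iff]
              intro u hu
              rw [not_not]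
              have hu0 : u ≤ Nat.find hx := le_trans (Nat.lt_succ_iff.mp hu) hkfind
              rw [hVag u hu0]
              rcases lt_or_eq_of_le hu0 with hlt | hEq
              · have hcol := not_not.mp (Nat.find_min hx hlt)
                exact pg_mono_colored (Nat.le_succ _) hcol
              · rw [hEq, ← hcbt]
                exact mem_colored_of_play
            · push_neg at hx'
              refine Or.inl ⟨(Nat.find hT0) + k + 1, by omega,
                winAt hc (hD2 _ (by omega)) (hw2 _) (fun u' _ => hx' _)⟩
    rcases prog t2 le_rfl with hwin | ⟨hx, hfind⟩
    · exact hwin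
    · refine ⟨(Nat.find hT0) + t2, by omega, winAt hc (hD2 _ (Nat.le_add_right _ _)) (hw2 _) ?_⟩
      intro u' hu'
      exact not_not.mp (Nat.find_min hx (lt_of_lt_of_le hu' hfind))

lemma combine_wins {g h mm : ℕ} (G : SimpleGraph (Fin g)) (H : SimpleGraph (Fin h))
    (F : SimpleGraph (Fin mm)) (C : Board) (t1 t2 : ℕ)
    (hGF : BuilderWinsIn C (fun B => RedCopy G B ∨ BlueCopy F B) t1)
    (hGH : BuilderWinsIn (blueGraphBoard F) (fun B => RedCopy G B ∨ BlueCopy H B) t2) :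
    BuilderWinsIn C (fun B => RedCopy G B ∨ BlueCopy H B) (t1 + t2) := by
  obtain ⟨b1, hv1, hw1⟩ := hGF
  obtain ⟨b2, hv2, hw2⟩ := hGH
  refine ⟨(comb b1 b2 (fun B => RedCopy G B ∨ BlueCopy F B) F C), fun p t => (key_all hv1 hv2 hw1 hw2 p).1 t,
    fun p => (key_all hv1 hv2 hw1 hw2 p).2⟩

lemma rtilde_le {init : Board} {W : Board → Prop} {t : ℕ} (h : BuilderWinsIn init W t) :
    rtilde init W ≤ (t : ℕ∞) :=
  sInf_le ⟨t, h, rfl⟩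

lemma rtilde_attained {init : Board} {W : Board → Prop} (h : rtilde init W ≠ ⊤) :
    ∃ t : ℕ, BuilderWinsIn init W t ∧ rtilde init W = (t : ℕ∞) := by
  classical
  have hne : ∃ t : ℕ, BuilderWinsIn init W t := by
    by_contra hemp
    push_neg at hemp
    apply h
    have : {m : ℕ∞ | ∃ t : ℕ, BuilderWinsIn init W t ∧ m = (t : ℕ∞)} = ∅ := by
      ext m
      simp only [Set.mem_setOf_eq, Set.mem_empty_iff_false, iff_false]
      rintro ⟨t, hwin, rfl⟩
      exact hemp t hwin
    rw [rtilde, this, sInf_empty]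
  refine ⟨Nat.find hne, Nat.find_spec hne, le_antisymm (rtilde_le (Nat.find_spec hne)) ?_⟩
  apply le_sInf
  rintro m ⟨t', hwin', rfl⟩
  exact_mod_cast Nat.find_min' hne hwin'

end ORTri
end OnlineRamseyAux

/-- Triangle inequality for online Ramsey games:
`r̃_C(G,H) ≤ r̃_C(G,F) + r̃_{F_b}(G,H)`, and in particular the case of the empty board. -/
theorem online_ramsey_triangle_inequality {g h f : ℕ}
    (G : SimpleGraph (Fin g)) (H : SimpleGraph (Fin h)) (F : SimpleGraph (Fin f))
    (C : Board) :
    rtilde C (fun B => RedCopy G B ∨ BlueCopy H B) ≤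
      rtilde C (fun B => RedCopy G B ∨ BlueCopy F B) +
        rtilde (blueGraphBoard F) (fun B => RedCopy G B ∨ BlueCopy H B) ∧
    rtilde emptyBoard (fun B => RedCopy G B ∨ BlueCopy H B) ≤
      rtilde emptyBoard (fun B => RedCopy G B ∨ BlueCopy F B) +
        rtilde (blueGraphBoard F) (fun B => RedCopy G B ∨ BlueCopy H B) := by
  have main : ∀ C' : Board,
      rtilde C' (fun B => RedCopy G B ∨ BlueCopy H B) ≤
        rtilde C' (fun B => RedCopy G B ∨ BlueCopy F B) +
          rtilde (blueGraphBoard F) (fun B => RedCopy G B ∨ BlueCopy H B) := by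
    intro C'
    by_cases h1 : rtilde C' (fun B => RedCopy G B ∨ BlueCopy F B) = ⊤
    · rw [h1, top_add]
      exact le_top
    by_cases h2 : rtilde (blueGraphBoard F) (fun B => RedCopy G B ∨ BlueCopy H B) = ⊤
    · rw [h2, add_top]
      exact le_top
    obtain ⟨t1, hw1, he1⟩ := ORTri.rtilde_attained h1
    obtain ⟨t2, hw2, he2⟩ := ORTri.rtilde_attained h2
    rw [he1, he2]
    calc rtilde C' (fun B => RedCopy G B ∨ BlueCopy H B)
        ≤ ((t1 + t2 : ℕ) : ℕ∞) :=
          ORTri.rtilde_le (ORTri.combine_wins G H F C' t1 t2 hw1 hw2)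
      _ = (t1 : ℕ∞) + (t2 : ℕ∞) := by push_cast; rfl
  exact ⟨main C, main emptyBoard⟩
end

section
/- For every k ≥ 1, in every online Ramsey game Builder can force, within 2k − 1 rounds, the existence of two vertex-disjoint monochromatic paths, one red and one blue, whose lengths (numbers of edges) sum to k. -/
open SimpleGraph

/-- The board contains two vertex-disjoint monochromatic paths, a red one and a blue
one, whose lengths (numbers of edges) sum to `k`. -/
def TwoDisjointPaths (k : ℕ) (B : Board) : Prop :=
  ∃ a c : ℕ, a + c = k ∧
    ∃ (f : Fin (a + 1) ↪ ℕ) (g : Fin (c + 1) ↪ ℕ),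
      (∀ x y, (SimpleGraph.pathGraph (a + 1)).Adj x y →
        (SimpleGraph.fromEdgeSet B.1).Adj (f x) (f y)) ∧
      (∀ x y, (SimpleGraph.pathGraph (c + 1)).Adj x y →
        (SimpleGraph.fromEdgeSet B.2).Adj (g x) (g y)) ∧
      (∀ x y, f x ≠ g y)

namespace TPaux

/-- maximum vertex of an edge -/
def maxV (e : Sym2 ℕ) : ℕ := Sym2.lift ⟨fun a b => max a b, fun a b => max_comm a b⟩ e

lemma le_maxV {v : ℕ} {e : Sym2 ℕ} (h : v ∈ e) : v ≤ maxV e := by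
  induction e using Sym2.ind with
  | _ a b =>
    rcases Sym2.mem_iff.1 h with rfl | rfl
    · exact le_max_left _ _
    · exact le_max_right _ _

lemma exists_bound {S : Set (Sym2 ℕ)} (h : S.Finite) :
    ∃ N, ∀ e ∈ S, ∀ v ∈ e, v < N := by
  obtain ⟨b, hb⟩ := (h.image maxV).bddAbove
  refine ⟨b + 1, fun e he v hv => ?_⟩
  have : maxV e ≤ b := hb (Set.mem_image_of_mem _ he)
  have := le_maxV hv
  omega

open Classical in
noncomputable def fallback (B : Board) : Sym2 ℕ :=
  if h : ∃ e : Sym2 ℕ, ¬ e.IsDiag ∧ e ∉ B.colored then h.choose else s(0, 1)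

lemma fallback_spec {B : Board} (h : B.colored.Finite) :
    ¬ (fallback B).IsDiag ∧ fallback B ∉ B.colored := by
  have hex : ∃ e : Sym2 ℕ, ¬ e.IsDiag ∧ e ∉ B.colored := by
    obtain ⟨N, hN⟩ := exists_bound h
    refine ⟨s(N, N + 1), ?_, fun hc => ?_⟩
    · simp [Sym2.mk_isDiag_iff]
    · have := hN _ hc (N + 1) (by simp [Sym2.mem_iff])
      omega
  rw [fallback, dif_pos hex]
  exact hex.choose_spec

end TPaux

namespace TPaux

attribute [local instance] Classical.propDecidable

inductive BTree where
  | leaf : BTree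
  | node : Sym2 ℕ → BTree → BTree → BTree

noncomputable def treeStrat : BTree → BuilderStrat
  | .leaf => fun B => fallback B
  | .node e r bl => fun B =>
      if e ∈ B.1 then treeStrat r B
      else if e ∈ B.2 then treeStrat bl B
      else if e.IsDiag then fallback B else e

lemma treeStrat_valid (t : BTree) {B : Board} (h : B.colored.Finite) :
    ¬ (treeStrat t B).IsDiag ∧ treeStrat t B ∉ B.colored := by
  induction t with
  | leaf => exact fallback_spec h
  | node e r bl ihr ihb =>
    have hE : treeStrat (BTree.node e r bl) B =
        if e ∈ B.1 then treeStrat r B else if e ∈ B.2 then treeStrat bl B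
        else if e.IsDiag then fallback B else e := rfl
    rw [hE]
    split_ifs with h1 h2 h3
    · exact ihr
    · exact ihb
    · exact fallback_spec h
    · exact ⟨h3, fun hc => hc.elim h1 h2⟩

def stepB (b : BuilderStrat) (p : PainterStrat) (B : Board) : Board :=
  if p B (b B) then (insert (b B) B.1, B.2) else (B.1, insert (b B) B.2)

lemma playGame_succ (b : BuilderStrat) (p : PainterStrat) (init : Board) (t : ℕ) :
    playGame b p init (t + 1) = stepB b p (playGame b p init t) := rfl

lemma colored_fst_insert (e : Sym2 ℕ) (A : Board) :
    (Board.colored (insert e A.1, A.2)) = insert e A.colored := by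
  simp [Board.colored, Set.insert_union]

lemma colored_snd_insert (e : Sym2 ℕ) (A : Board) :
    (Board.colored (A.1, insert e A.2)) = insert e A.colored := by
  simp [Board.colored, Set.union_insert]

lemma stepB_finite (b : BuilderStrat) (p : PainterStrat) {B : Board}
    (h : B.colored.Finite) : (stepB b p B).colored.Finite := by
  rw [stepB]
  split_ifs
  · rw [colored_fst_insert]; exact h.insert _
  · rw [colored_snd_insert]; exact h.insert _

lemma playGame_finite (b : BuilderStrat) (p : PainterStrat) {B : Board}
    (h : B.colored.Finite) (t : ℕ) : (playGame b p B t).colored.Finite := by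
  induction t with
  | zero => exact h
  | succ t ih => rw [playGame_succ]; exact stepB_finite _ _ ih

lemma playGame_shift (b : BuilderStrat) (p : PainterStrat) (B : Board) (s : ℕ) :
    playGame b p B (s + 1) = playGame b p (stepB b p B) s := by
  induction s with
  | zero => rfl
  | succ s ih => rw [playGame_succ, ih, playGame_succ]

end TPaux

namespace TPaux
attribute [local instance] Classical.propDecidable

lemma treeStrat_node_eq_fst {e : Sym2 ℕ} {r bl : BTree} {X : Board} (h : e ∈ X.1) :
    treeStrat (.node e r bl) X = treeStrat r X := by
  have hE : treeStrat (BTree.node e r bl) X =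
      if e ∈ X.1 then treeStrat r X else if e ∈ X.2 then treeStrat bl X
      else if e.IsDiag then fallback X else e := rfl
  rw [hE, if_pos h]

lemma treeStrat_node_eq_snd {e : Sym2 ℕ} {r bl : BTree} {X : Board}
    (h1 : e ∉ X.1) (h2 : e ∈ X.2) :
    treeStrat (.node e r bl) X = treeStrat bl X := by
  have hE : treeStrat (BTree.node e r bl) X =
      if e ∈ X.1 then treeStrat r X else if e ∈ X.2 then treeStrat bl X
      else if e.IsDiag then fallback X else e := rfl
  rw [hE, if_neg h1, if_pos h2]

lemma play_node_fst {e : Sym2 ℕ} {r bl : BTree} (p : PainterStrat) {B' : Board}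
    (he : e ∈ B'.1) (s : ℕ) :
    playGame (treeStrat (.node e r bl)) p B' s = playGame (treeStrat r) p B' s ∧
      e ∈ (playGame (treeStrat r) p B' s).1 := by
  induction s with
  | zero => exact ⟨rfl, he⟩
  | succ s ih =>
    obtain ⟨heq, hmem⟩ := ih
    rw [playGame_succ, playGame_succ, heq]
    set X := playGame (treeStrat r) p B' s
    have hb : treeStrat (.node e r bl) X = treeStrat r X := treeStrat_node_eq_fst hmem
    constructor
    · rw [stepB, stepB, hb]
    · rw [stepB]
      split_ifs
      · exact Set.mem_insert_of_mem _ hmem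
      · exact hmem

lemma play_node_snd {e : Sym2 ℕ} {r bl : BTree} (p : PainterStrat) {B' : Board}
    (hfin : B'.colored.Finite) (hne : e ∉ B'.1) (he : e ∈ B'.2) (s : ℕ) :
    playGame (treeStrat (.node e r bl)) p B' s = playGame (treeStrat bl) p B' s ∧
      e ∉ (playGame (treeStrat bl) p B' s).1 ∧ e ∈ (playGame (treeStrat bl) p B' s).2 := by
  induction s with
  | zero => exact ⟨rfl, hne, he⟩
  | succ s ih =>
    obtain ⟨heq, hmem1, hmem2⟩ := ih
    rw [playGame_succ, playGame_succ, heq]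
    set X := playGame (treeStrat bl) p B' s with hX
    have hXfin : X.colored.Finite := playGame_finite _ _ hfin s
    have hb : treeStrat (.node e r bl) X = treeStrat bl X :=
      treeStrat_node_eq_snd hmem1 hmem2
    have hpick : treeStrat bl X ∉ X.colored := (treeStrat_valid bl hXfin).2
    have hnee : treeStrat bl X ≠ e := fun h => hpick (h ▸ Or.inr hmem2)
    refine ⟨by rw [stepB, stepB, hb], ?_, ?_⟩
    · rw [stepB]
      split_ifs
      · intro hc
        rcases Set.mem_insert_iff.1 hc with h | h
        · exact hnee h.symm
        · exact hmem1 h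
      · exact hmem1
    · rw [stepB]
      split_ifs
      · exact hmem2
      · exact Set.mem_insert_of_mem _ hmem2

inductive Forces (W : Board → Prop) : BTree → Board → ℕ → Prop
  | done {t : BTree} {B : Board} {m : ℕ} : W B → Forces W t B m
  | step {e : Sym2 ℕ} {r bl : BTree} {B : Board} {m : ℕ} :
      ¬ e.IsDiag → e ∉ B.colored →
      Forces W r (insert e B.1, B.2) m → Forces W bl (B.1, insert e B.2) m →
      Forces W (.node e r bl) B (m + 1)

lemma forces_win {W : Board → Prop} {t : BTree} {B : Board} {m : ℕ}
    (h : Forces W t B m) (hfin : B.colored.Finite) :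
    ∀ p : PainterStrat, ∃ s, s ≤ m ∧ W (playGame (treeStrat t) p B s) := by
  induction h with
  | done hw => exact fun p => ⟨0, Nat.zero_le _, hw⟩
  | @step e r bl B m hd hc hr hb ihr ihb =>
    intro p
    have h1 : e ∉ B.1 := fun h => hc (Or.inl h)
    have h2 : e ∉ B.2 := fun h => hc (Or.inr h)
    have hbB : treeStrat (.node e r bl) B = e := by
      have hE : treeStrat (BTree.node e r bl) B =
          if e ∈ B.1 then treeStrat r B else if e ∈ B.2 then treeStrat bl B
          else if e.IsDiag then fallback B else e := rfl
      rw [hE, if_neg h1, if_neg h2, if_neg hd]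
    by_cases hp : p B e
    · have hstep : stepB (treeStrat (.node e r bl)) p B = (insert e B.1, B.2) := by
        rw [stepB, hbB, if_pos hp]
      have hfin' : (Board.colored (insert e B.1, B.2)).Finite := by
        rw [colored_fst_insert]; exact hfin.insert _
      obtain ⟨s, hs, hw⟩ := ihr hfin' p
      refine ⟨s + 1, by omega, ?_⟩
      rw [playGame_shift, hstep]
      rwa [(play_node_fst p (Set.mem_insert _ _) s).1]
    · have hstep : stepB (treeStrat (.node e r bl)) p B = (B.1, insert e B.2) := by
        rw [stepB, hbB, if_neg hp]
      have hfin' : (Board.colored (B.1, insert e B.2)).Finite := by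
        rw [colored_snd_insert]; exact hfin.insert _
      obtain ⟨s, hs, hw⟩ := ihb hfin' p
      refine ⟨s + 1, by omega, ?_⟩
      rw [playGame_shift, hstep]
      rwa [(play_node_snd p hfin' h1 (Set.mem_insert _ _) s).1]

end TPaux

namespace TPaux

lemma forces_builderWins {W : Board → Prop} {init : Board} {m : ℕ}
    (hfin : init.colored.Finite) (h : ∃ t : BTree, Forces W t init m) :
    BuilderWinsIn init W m := by
  obtain ⟨t, ht⟩ := h
  refine ⟨treeStrat t, fun p n => ?_, fun p => forces_win ht hfin p⟩
  exact treeStrat_valid t (playGame_finite _ _ hfin n)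

end TPaux

namespace TPaux

def IsPath (E : Set (Sym2 ℕ)) (f : ℕ → ℕ) (a : ℕ) : Prop :=
  (∀ i j, i ≤ a → j ≤ a → f i = f j → i = j) ∧
  ∀ i, i < a → s(f i, f (i + 1)) ∈ E

def Inv (B : Board) (N n : ℕ) : Prop :=
  (∀ e ∈ B.colored, ∀ v ∈ e, v < N) ∧
  ∃ a c : ℕ, ∃ f g : ℕ → ℕ, a + c = n ∧
    IsPath B.1 f a ∧ IsPath B.2 g c ∧
    (∀ i j, i ≤ a → j ≤ c → f i ≠ g j) ∧
    (∀ i, i ≤ a → f i < N) ∧ (∀ i, i ≤ c → g i < N) ∧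
    s(f 0, g 0) ∉ B.colored

def cons (v : ℕ) (f : ℕ → ℕ) : ℕ → ℕ := fun i => if i = 0 then v else f (i - 1)

@[simp] lemma cons_zero (v : ℕ) (f : ℕ → ℕ) : cons v f 0 = v := rfl
@[simp] lemma cons_succ (v : ℕ) (f : ℕ → ℕ) (i : ℕ) : cons v f (i + 1) = f i := by
  simp [cons]

lemma isPath_mono {E E' : Set (Sym2 ℕ)} {f : ℕ → ℕ} {a : ℕ} (h : E ⊆ E')
    (hf : IsPath E f a) : IsPath E' f a :=
  ⟨hf.1, fun i hi => h (hf.2 i hi)⟩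

lemma isPath_cons {E : Set (Sym2 ℕ)} {f : ℕ → ℕ} {a v : ℕ} (hf : IsPath E f a)
    (hne : ∀ i, i ≤ a → f i ≠ v) (he : s(v, f 0) ∈ E) :
    IsPath E (cons v f) (a + 1) := by
  constructor
  · rintro (_ | i) (_ | j) hi hj hij
    · rfl
    · exact absurd (by simpa using hij.symm) (hne j (by omega))
    · exact absurd (by simpa using hij) (hne i (by omega))
    · simp only [cons_succ] at hij
      have := hf.1 i j (by omega) (by omega) hij
      omega
  · rintro (_ | i) hi
    · simpa using he
    · simpa using hf.2 i (by omega)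

lemma isPath_tail {E : Set (Sym2 ℕ)} {f : ℕ → ℕ} {a : ℕ} (hf : IsPath E f (a + 1)) :
    IsPath E (fun i => f (i + 1)) a := by
  constructor
  · intro i j hi hj hij
    have := hf.1 (i + 1) (j + 1) (by omega) (by omega) hij
    omega
  · intro i hi
    exact hf.2 (i + 1) (by omega)

lemma isPath_const (E : Set (Sym2 ℕ)) (v : ℕ) : IsPath E (fun _ => v) 0 :=
  ⟨fun i j hi hj _ => by omega, fun i hi => by omega⟩

lemma not_mem_of_ge {S : Set (Sym2 ℕ)} {N : ℕ} (hbd : ∀ e ∈ S, ∀ v ∈ e, v < N)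
    (u w : ℕ) (h : N ≤ w) : s(u, w) ∉ S :=
  fun hc => absurd (hbd _ hc w (Sym2.mem_mk_right u w)) (by omega)

lemma mem_colored_pair {X Y : Set (Sym2 ℕ)} {e : Sym2 ℕ}
    (h : e ∈ Board.colored (X, Y)) : e ∈ X ∨ e ∈ Y := h

lemma inv_win {B : Board} {N k : ℕ} (h : Inv B N k) : TwoDisjointPaths k B := by
  obtain ⟨-, a, c, f, g, hn, hf, hg, hdisj, -, -, -⟩ := h
  have hfinj : Function.Injective (fun i : Fin (a + 1) => f i.val) := by
    intro i j hij
    exact Fin.ext (hf.1 _ _ (Nat.lt_succ_iff.1 i.isLt) (Nat.lt_succ_iff.1 j.isLt) hij)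
  have hginj : Function.Injective (fun i : Fin (c + 1) => g i.val) := by
    intro i j hij
    exact Fin.ext (hg.1 _ _ (Nat.lt_succ_iff.1 i.isLt) (Nat.lt_succ_iff.1 j.isLt) hij)
  refine ⟨a, c, hn, ⟨fun i => f i.val, hfinj⟩, ⟨fun i => g i.val, hginj⟩, ?_, ?_, ?_⟩
  · intro x y hxy
    rw [SimpleGraph.pathGraph_adj] at hxy
    simp only [Function.Embedding.coeFn_mk]
    rw [SimpleGraph.fromEdgeSet_adj]
    have hxyne : (x : ℕ) ≠ (y : ℕ) := by omega
    refine ⟨?_, fun hc => hxyne (hf.1 _ _ (Nat.lt_succ_iff.1 x.isLt) (Nat.lt_succ_iff.1 y.isLt) hc)⟩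
    rcases hxy with h | h
    · have h2 := hf.2 x.val (by omega)
      rw [h] at h2
      exact h2
    · have h2 := hf.2 y.val (by omega)
      rw [h] at h2
      rw [Sym2.eq_swap]
      exact h2
  · intro x y hxy
    rw [SimpleGraph.pathGraph_adj] at hxy
    simp only [Function.Embedding.coeFn_mk]
    rw [SimpleGraph.fromEdgeSet_adj]
    have hxyne : (x : ℕ) ≠ (y : ℕ) := by omega
    refine ⟨?_, fun hc => hxyne (hg.1 _ _ (Nat.lt_succ_iff.1 x.isLt) (Nat.lt_succ_iff.1 y.isLt) hc)⟩
    rcases hxy with h | h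
    · have h2 := hg.2 x.val (by omega)
      rw [h] at h2
      exact h2
    · have h2 := hg.2 y.val (by omega)
      rw [h] at h2
      rw [Sym2.eq_swap]
      exact h2
  · intro x y
    simp only [Function.Embedding.coeFn_mk]
    exact hdisj _ _ (Nat.lt_succ_iff.1 x.isLt) (Nat.lt_succ_iff.1 y.isLt)

end TPaux

namespace TPaux

lemma inv_step (k : ℕ) :
    ∀ m n N B, Inv B N n → n + m = k →
      ∃ t : BTree, Forces (TwoDisjointPaths k) t B (2 * m) := by
  intro m
  induction m with
  | zero =>
    intro n N B hInv hsum
    rw [Nat.add_zero] at hsum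
    subst hsum
    exact ⟨.leaf, .done (inv_win hInv)⟩
  | succ m ih =>
    intro n N B hInv hsum
    obtain ⟨hbd, a, c, f, g, hn, hf, hg, hdisj, hfN, hgN, hxy⟩ := hInv
    set x := f 0 with hxdef
    set y := g 0 with hydef
    have hx : x < N := hfN 0 (Nat.zero_le _)
    have hy : y < N := hgN 0 (Nat.zero_le _)
    have hxyne : x ≠ y := hdisj 0 0 (Nat.zero_le _) (Nat.zero_le _)
    -- first move: e1 = s(x,y)
    have hd1 : ¬ (s(x, y)).IsDiag := by rw [Sym2.mk_isDiag_iff]; exact hxyne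
    -- RED branch: B1r
    have hc2r : s(y, N) ∉ (Board.colored (insert s(x, y) B.1, B.2)) := by
      rw [colored_fst_insert]
      intro hc
      rcases Set.mem_insert_iff.1 hc with h | h
      · rcases Sym2.eq_iff.1 h with ⟨h1, h2⟩ | ⟨h1, h2⟩ <;> omega
      · exact not_mem_of_ge hbd y N le_rfl h
    have hd2r : ¬ (s(y, N)).IsDiag := by rw [Sym2.mk_isDiag_iff]; omega
    -- BLUE branch
    have hc2b : s(x, N) ∉ (Board.colored (B.1, insert s(x, y) B.2)) := by
      rw [colored_snd_insert]
      intro hc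
      rcases Set.mem_insert_iff.1 hc with h | h
      · rcases Sym2.eq_iff.1 h with ⟨h1, h2⟩ | ⟨h1, h2⟩ <;> omega
      · exact not_mem_of_ge hbd x N le_rfl h
    have hd2b : ¬ (s(x, N)).IsDiag := by rw [Sym2.mk_isDiag_iff]; omega
    -- == Case RR: board (insert s(y,N) (insert s(x,y) B.1), B.2)
    have hInvRR : Inv (insert s(y, N) (insert s(x, y) B.1), B.2) (N + 2) (n + 1) := by
      have hbd2 : ∀ e ∈ (Board.colored (insert s(y, N) (insert s(x, y) B.1), B.2)),
          ∀ v ∈ e, v < N + 2 := by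
        intro e he v hv
        have : e ∈ insert s(y, N) (insert s(x, y) (B.1 ∪ B.2)) := by
          simpa [Board.colored, Set.insert_union] using he
        rcases Set.mem_insert_iff.1 this with rfl | h
        · rcases Sym2.mem_iff.1 hv with rfl | rfl <;> omega
        · rcases Set.mem_insert_iff.1 h with rfl | h
          · rcases Sym2.mem_iff.1 hv with rfl | rfl <;> omega
          · have := hbd _ h v hv; omega
      have hsub : B.1 ⊆ insert s(y, N) (insert s(x, y) B.1) :=
        (Set.subset_insert _ _).trans (Set.subset_insert _ _)
      refine ⟨hbd2, ?_⟩
      by_cases hc0 : c = 0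
      · -- red path: cons y f (a+1 edges), blue: single fresh vertex N+1
        refine ⟨a + 1, 0, cons y f, fun _ => N + 1, by omega, ?_, isPath_const _ _, ?_, ?_, ?_, ?_⟩
        · refine isPath_cons (isPath_mono hsub hf) (fun i hi => hdisj i 0 hi (Nat.zero_le _)) ?_
          have : s(y, f 0) = s(x, y) := by rw [← hxdef, Sym2.eq_swap]
          rw [this]
          exact Set.mem_insert_of_mem _ (Set.mem_insert _ _)
        · rintro (_ | i) j hi hj
          · simp only [cons_zero]; omega
          · simp only [cons_succ]
            have := hfN i (by omega); omega
        · rintro (_ | i) hi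
          · simp only [cons_zero]; omega
          · simp only [cons_succ]
            have := hfN i (by omega); omega
        · intro i _
          show N + 1 < N + 2
          omega
        · simp only [cons_zero]
          intro hc
          have : s(y, N + 1) ∈ insert s(y, N) (insert s(x, y) (B.1 ∪ B.2)) := by
            simpa [Board.colored, Set.insert_union] using hc
          rcases Set.mem_insert_iff.1 this with h | h
          · rcases Sym2.eq_iff.1 h with ⟨h1, h2⟩ | ⟨h1, h2⟩ <;> omega
          · rcases Set.mem_insert_iff.1 h with h | h
            · rcases Sym2.eq_iff.1 h with ⟨h1, h2⟩ | ⟨h1, h2⟩ <;> omega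
            · exact not_mem_of_ge hbd y (N + 1) (by omega) h
      · -- c ≥ 1: red: cons N (cons y f) (a+2 edges), blue: tail of g (c-1 edges)
        obtain ⟨c', rfl⟩ : ∃ c', c = c' + 1 := ⟨c - 1, by omega⟩
        refine ⟨a + 2, c', cons N (cons y f), fun i => g (i + 1), by omega, ?_, ?_, ?_, ?_, ?_, ?_⟩
        · have inner : IsPath (insert s(y, N) (insert s(x, y) B.1)) (cons y f) (a + 1) := by
            refine isPath_cons (isPath_mono hsub hf) (fun i hi => hdisj i 0 hi (Nat.zero_le _)) ?_
            have : s(y, f 0) = s(x, y) := by rw [← hxdef, Sym2.eq_swap]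
            rw [this]
            exact Set.mem_insert_of_mem _ (Set.mem_insert _ _)
          refine isPath_cons inner ?_ ?_
          · rintro (_ | i) hi
            · simp only [cons_zero]; omega
            · simp only [cons_succ]
              have := hfN i (by omega); omega
          · simp only [cons_zero]
            have : s(N, y) = s(y, N) := Sym2.eq_swap
            rw [this]
            exact Set.mem_insert _ _
        · exact isPath_tail hg
        · rintro (_ | _ | i) j hi hj
          · simp only [cons_zero]
            have := hgN (j + 1) (by omega); omega
          · simp only [cons_succ, cons_zero]
            intro h
            have := hg.1 0 (j + 1) (by omega) (by omega) h
            omega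
          · simp only [cons_succ]
            exact hdisj i (j + 1) (by omega) (by omega)
        · rintro (_ | _ | i) hi
          · simp only [cons_zero]; omega
          · simp only [cons_succ, cons_zero]; omega
          · simp only [cons_succ]
            have := hfN i (by omega); omega
        · intro i hi
          show g (i + 1) < N + 2
          have := hgN (i + 1) (by omega); omega
        · simp only [cons_zero]
          intro hc
          have : s(N, g 1) ∈ insert s(y, N) (insert s(x, y) (B.1 ∪ B.2)) := by
            simpa [Board.colored, Set.insert_union] using hc
          rcases Set.mem_insert_iff.1 this with h | h
          · rcases Sym2.eq_iff.1 h with ⟨h1, h2⟩ | ⟨h1, h2⟩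
            · omega
            · have := hg.1 1 0 (by omega) (by omega) (h2.trans hydef); omega
          · rcases Set.mem_insert_iff.1 h with h | h
            · rcases Sym2.eq_iff.1 h with ⟨h1, h2⟩ | ⟨h1, h2⟩ <;> omega
            · have hgg := hgN 1 (by omega)
              have : s(N, g 1) = s(g 1, N) := Sym2.eq_swap
              rw [this] at h
              exact not_mem_of_ge hbd (g 1) N le_rfl h
    -- == Case RB: board (insert s(x,y) B.1, insert s(y,N) B.2)
    have hInvRB : Inv (insert s(x, y) B.1, insert s(y, N) B.2) (N + 2) (n + 1) := by
      have hbd2 : ∀ e ∈ (Board.colored (insert s(x, y) B.1, insert s(y, N) B.2)),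
          ∀ v ∈ e, v < N + 2 := by
        intro e he v hv
        rcases mem_colored_pair he with h | h
        · rcases Set.mem_insert_iff.1 h with rfl | h
          · rcases Sym2.mem_iff.1 hv with rfl | rfl <;> omega
          · have := hbd _ (Or.inl h) v hv; omega
        · rcases Set.mem_insert_iff.1 h with rfl | h
          · rcases Sym2.mem_iff.1 hv with rfl | rfl <;> omega
          · have := hbd _ (Or.inr h) v hv; omega
      refine ⟨hbd2, a, c + 1, f, cons N g, by omega, isPath_mono (Set.subset_insert _ _) hf,
        ?_, ?_, ?_, ?_, ?_⟩
      · refine isPath_cons (isPath_mono (Set.subset_insert _ _) hg)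
          (fun i hi => by have := hgN i hi; omega) ?_
        have : s(N, g 0) = s(y, N) := by rw [← hydef, Sym2.eq_swap]
        rw [this]
        exact Set.mem_insert _ _
      · rintro i (_ | j) hi hj
        · simp only [cons_zero]
          have := hfN i hi; omega
        · simp only [cons_succ]
          exact hdisj i j hi (by omega)
      · intro i hi; have := hfN i hi; omega
      · rintro (_ | i) hi
        · simp only [cons_zero]; omega
        · simp only [cons_succ]
          have := hgN i (by omega); omega
      · simp only [cons_zero]
        intro hc
        rcases mem_colored_pair hc with h | h
        · rcases Set.mem_insert_iff.1 h with h | h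
          · rcases Sym2.eq_iff.1 h with ⟨h1, h2⟩ | ⟨h1, h2⟩ <;> omega
          · exact not_mem_of_ge hbd (f 0) N le_rfl (Or.inl h)
        · rcases Set.mem_insert_iff.1 h with h | h
          · rcases Sym2.eq_iff.1 h with ⟨h1, h2⟩ | ⟨h1, h2⟩
            · exact hxyne (h1.trans hydef.symm)
            · omega
          · exact not_mem_of_ge hbd (f 0) N le_rfl (Or.inr h)
    -- == Case BR: board (insert s(x,N) B.1, insert s(x,y) B.2)
    have hInvBR : Inv (insert s(x, N) B.1, insert s(x, y) B.2) (N + 2) (n + 1) := by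
      have hbd2 : ∀ e ∈ (Board.colored (insert s(x, N) B.1, insert s(x, y) B.2)),
          ∀ v ∈ e, v < N + 2 := by
        intro e he v hv
        rcases mem_colored_pair he with h | h
        · rcases Set.mem_insert_iff.1 h with rfl | h
          · rcases Sym2.mem_iff.1 hv with rfl | rfl <;> omega
          · have := hbd _ (Or.inl h) v hv; omega
        · rcases Set.mem_insert_iff.1 h with rfl | h
          · rcases Sym2.mem_iff.1 hv with rfl | rfl <;> omega
          · have := hbd _ (Or.inr h) v hv; omega
      refine ⟨hbd2, a + 1, c, cons N f, g, by omega, ?_,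
        isPath_mono (Set.subset_insert _ _) hg, ?_, ?_, ?_, ?_⟩
      · refine isPath_cons (isPath_mono (Set.subset_insert _ _) hf)
          (fun i hi => by have := hfN i hi; omega) ?_
        have : s(N, f 0) = s(x, N) := by rw [← hxdef, Sym2.eq_swap]
        rw [this]
        exact Set.mem_insert _ _
      · rintro (_ | i) j hi hj
        · simp only [cons_zero]
          have := hgN j hj; omega
        · simp only [cons_succ]
          exact hdisj i j (by omega) hj
      · rintro (_ | i) hi
        · simp only [cons_zero]; omega
        · simp only [cons_succ]
          have := hfN i (by omega); omega
      · intro i hi; have := hgN i hi; omega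
      · simp only [cons_zero]
        intro hc
        rcases mem_colored_pair hc with h | h
        · rcases Set.mem_insert_iff.1 h with h | h
          · rcases Sym2.eq_iff.1 h with ⟨h1, h2⟩ | ⟨h1, h2⟩ <;> omega
          · have heq : s(N, g 0) = s(g 0, N) := Sym2.eq_swap
            rw [heq] at h
            exact not_mem_of_ge hbd (g 0) N le_rfl (Or.inl h)
        · rcases Set.mem_insert_iff.1 h with h | h
          · rcases Sym2.eq_iff.1 h with ⟨h1, h2⟩ | ⟨h1, h2⟩ <;> omega
          · have heq : s(N, g 0) = s(g 0, N) := Sym2.eq_swap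
            rw [heq] at h
            exact not_mem_of_ge hbd (g 0) N le_rfl (Or.inr h)
    -- == Case BB: board (B.1, insert s(x,N) (insert s(x,y) B.2))
    have hInvBB : Inv (B.1, insert s(x, N) (insert s(x, y) B.2)) (N + 2) (n + 1) := by
      have hbd2 : ∀ e ∈ (Board.colored (B.1, insert s(x, N) (insert s(x, y) B.2))),
          ∀ v ∈ e, v < N + 2 := by
        intro e he v hv
        have : e ∈ insert s(x, N) (insert s(x, y) (B.1 ∪ B.2)) := by
          simpa [Board.colored, Set.union_insert] using he
        rcases Set.mem_insert_iff.1 this with rfl | h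
        · rcases Sym2.mem_iff.1 hv with rfl | rfl <;> omega
        · rcases Set.mem_insert_iff.1 h with rfl | h
          · rcases Sym2.mem_iff.1 hv with rfl | rfl <;> omega
          · have := hbd _ h v hv; omega
      have hsub : B.2 ⊆ insert s(x, N) (insert s(x, y) B.2) :=
        (Set.subset_insert _ _).trans (Set.subset_insert _ _)
      refine ⟨hbd2, ?_⟩
      by_cases ha0 : a = 0
      · -- blue path: cons x g (c+1 edges), red: single fresh vertex N+1
        refine ⟨0, c + 1, fun _ => N + 1, cons x g, by omega, isPath_const _ _, ?_, ?_, ?_, ?_, ?_⟩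
        · refine isPath_cons (isPath_mono hsub hg)
            (fun i hi => fun h => hdisj 0 i (Nat.zero_le _) hi (hxdef ▸ h.symm)) ?_
          have hxy' : s(x, g 0) = s(x, y) := by rw [← hydef]
          rw [hxy']
          exact Set.mem_insert_of_mem _ (Set.mem_insert _ _)
        · rintro i (_ | j) hi hj
          · simp only [cons_zero]; omega
          · simp only [cons_succ]
            have := hgN j (by omega); omega
        · intro i _
          show N + 1 < N + 2
          omega
        · rintro (_ | i) hi
          · simp only [cons_zero]; omega
          · simp only [cons_succ]
            have := hgN i (by omega); omega
        · simp only [cons_zero]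
          intro hc
          have : s(N + 1, x) ∈ insert s(x, N) (insert s(x, y) (B.1 ∪ B.2)) := by
            simpa [Board.colored, Set.union_insert] using hc
          rcases Set.mem_insert_iff.1 this with h | h
          · rcases Sym2.eq_iff.1 h with ⟨h1, h2⟩ | ⟨h1, h2⟩ <;> omega
          · rcases Set.mem_insert_iff.1 h with h | h
            · rcases Sym2.eq_iff.1 h with ⟨h1, h2⟩ | ⟨h1, h2⟩ <;> omega
            · have : s(N + 1, x) = s(x, N + 1) := Sym2.eq_swap
              rw [this] at h
              exact not_mem_of_ge hbd x (N + 1) (by omega) h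
      · -- a ≥ 1: red: tail of f (a-1 edges), blue: cons N (cons x g) (c+2 edges)
        obtain ⟨a', rfl⟩ : ∃ a', a = a' + 1 := ⟨a - 1, by omega⟩
        refine ⟨a', c + 2, fun i => f (i + 1), cons N (cons x g), by omega, isPath_tail hf,
          ?_, ?_, ?_, ?_, ?_⟩
        · have inner : IsPath (insert s(x, N) (insert s(x, y) B.2)) (cons x g) (c + 1) := by
            refine isPath_cons (isPath_mono hsub hg)
              (fun i hi => fun h => hdisj 0 i (Nat.zero_le _) hi (hxdef ▸ h.symm)) ?_
            have hxy' : s(x, g 0) = s(x, y) := by rw [← hydef]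
            rw [hxy']
            exact Set.mem_insert_of_mem _ (Set.mem_insert _ _)
          refine isPath_cons inner ?_ ?_
          · rintro (_ | i) hi
            · simp only [cons_zero]; omega
            · simp only [cons_succ]
              have := hgN i (by omega); omega
          · simp only [cons_zero]
            have : s(N, x) = s(x, N) := Sym2.eq_swap
            rw [this]
            exact Set.mem_insert _ _
        · rintro i (_ | _ | j) hi hj
          · simp only [cons_zero]
            have := hfN (i + 1) (by omega); omega
          · simp only [cons_succ, cons_zero]
            intro h
            have := hf.1 (i + 1) 0 (by omega) (by omega) (h.trans hxdef)
            omega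
          · simp only [cons_succ]
            exact hdisj (i + 1) j (by omega) (by omega)
        · intro i hi
          show f (i + 1) < N + 2
          have := hfN (i + 1) (by omega); omega
        · rintro (_ | _ | i) hi
          · simp only [cons_zero]; omega
          · simp only [cons_succ, cons_zero]; omega
          · simp only [cons_succ]
            have := hgN i (by omega); omega
        · simp only [cons_zero]
          intro hc
          have : s(f 1, N) ∈ insert s(x, N) (insert s(x, y) (B.1 ∪ B.2)) := by
            simpa [Board.colored, Set.union_insert] using hc
          rcases Set.mem_insert_iff.1 this with h | h
          · rcases Sym2.eq_iff.1 h with ⟨h1, h2⟩ | ⟨h1, h2⟩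
            · have := hf.1 1 0 (by omega) (by omega) (h1.trans hxdef); omega
            · omega
          · rcases Set.mem_insert_iff.1 h with h | h
            · rcases Sym2.eq_iff.1 h with ⟨h1, h2⟩ | ⟨h1, h2⟩ <;> omega
            · exact not_mem_of_ge hbd (f 1) N le_rfl h
    -- assemble the tree
    obtain ⟨trr, hrr⟩ := ih (n + 1) (N + 2) _ hInvRR (by omega)
    obtain ⟨trb, hrb⟩ := ih (n + 1) (N + 2) _ hInvRB (by omega)
    obtain ⟨tbr, hbr⟩ := ih (n + 1) (N + 2) _ hInvBR (by omega)
    obtain ⟨tbb, hbb⟩ := ih (n + 1) (N + 2) _ hInvBB (by omega)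
    refine ⟨.node s(x, y) (.node s(y, N) trr trb) (.node s(x, N) tbr tbb), ?_⟩
    have h2m : 2 * (m + 1) = (2 * m + 1) + 1 := by ring
    rw [h2m]
    exact Forces.step hd1 hxy (Forces.step hd2r hc2r hrr hrb) (Forces.step hd2b hc2b hbr hbb)

end TPaux

/-- Grytczuk–Kierstead–Prałat: for every `k ≥ 1`, in every online Ramsey game Builder
can force, within `2k - 1` rounds, two vertex-disjoint monochromatic paths, one red
and one blue, whose lengths sum to `k`. -/
theorem builder_forces_two_paths (k : ℕ) (hk : 1 ≤ k) (init : Board)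
    (hfin : init.colored.Finite) :
    BuilderWinsIn init (TwoDisjointPaths k) (2 * k - 1) := by
  classical
  obtain ⟨N, hN⟩ := TPaux.exists_bound hfin
  have hc1 : s(N, N + 1) ∉ init.colored := TPaux.not_mem_of_ge hN N (N + 1) (by omega)
  have hd1 : ¬ (s(N, N + 1)).IsDiag := by rw [Sym2.mk_isDiag_iff]; omega
  have hInvR : TPaux.Inv (insert s(N, N + 1) init.1, init.2) (N + 3) 1 := by
    refine ⟨?_, 1, 0, TPaux.cons N (fun _ => N + 1), fun _ => N + 2, rfl, ?_, ?_, ?_, ?_, ?_, ?_⟩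
    · intro e he v hv
      rcases TPaux.mem_colored_pair he with h | h
      · rcases Set.mem_insert_iff.1 h with rfl | h
        · rcases Sym2.mem_iff.1 hv with rfl | rfl <;> omega
        · have := hN _ (Or.inl h) v hv; omega
      · have := hN _ (Or.inr h) v hv; omega
    · refine TPaux.isPath_cons (TPaux.isPath_const _ _) (fun i _ => by show N + 1 ≠ N; omega) ?_
      exact Set.mem_insert _ _
    · exact TPaux.isPath_const _ _
    · rintro (_ | i) j hi hj
      · show N ≠ N + 2; omega
      · show N + 1 ≠ N + 2; omega
    · rintro (_ | i) hi
      · show N < N + 3; omega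
      · show N + 1 < N + 3; omega
    · intro i _; show N + 2 < N + 3; omega
    · show s(N, N + 2) ∉ _
      intro hc
      rcases TPaux.mem_colored_pair hc with h | h
      · rcases Set.mem_insert_iff.1 h with h | h
        · rcases Sym2.eq_iff.1 h with ⟨h1, h2⟩ | ⟨h1, h2⟩ <;> omega
        · exact TPaux.not_mem_of_ge hN N (N + 2) (by omega) (Or.inl h)
      · exact TPaux.not_mem_of_ge hN N (N + 2) (by omega) (Or.inr h)
  have hInvB : TPaux.Inv (init.1, insert s(N, N + 1) init.2) (N + 3) 1 := by
    refine ⟨?_, 0, 1, (fun _ => N + 2), TPaux.cons N (fun _ => N + 1), rfl, ?_, ?_, ?_, ?_, ?_, ?_⟩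
    · intro e he v hv
      rcases TPaux.mem_colored_pair he with h | h
      · have := hN _ (Or.inl h) v hv; omega
      · rcases Set.mem_insert_iff.1 h with rfl | h
        · rcases Sym2.mem_iff.1 hv with rfl | rfl <;> omega
        · have := hN _ (Or.inr h) v hv; omega
    · exact TPaux.isPath_const _ _
    · refine TPaux.isPath_cons (TPaux.isPath_const _ _) (fun i _ => by show N + 1 ≠ N; omega) ?_
      exact Set.mem_insert _ _
    · rintro i (_ | j) hi hj
      · show N + 2 ≠ N; omega
      · show N + 2 ≠ N + 1; omega
    · intro i _; show N + 2 < N + 3; omega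
    · rintro (_ | i) hi
      · show N < N + 3; omega
      · show N + 1 < N + 3; omega
    · show s(N + 2, N) ∉ _
      intro hc
      rcases TPaux.mem_colored_pair hc with h | h
      · have heq : s(N + 2, N) = s(N, N + 2) := Sym2.eq_swap
        rw [heq] at h
        exact TPaux.not_mem_of_ge hN N (N + 2) (by omega) (Or.inl h)
      · rcases Set.mem_insert_iff.1 h with h | h
        · rcases Sym2.eq_iff.1 h with ⟨h1, h2⟩ | ⟨h1, h2⟩ <;> omega
        · have heq : s(N + 2, N) = s(N, N + 2) := Sym2.eq_swap
          rw [heq] at h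
          exact TPaux.not_mem_of_ge hN N (N + 2) (by omega) (Or.inr h)
  obtain ⟨tr, htr⟩ := TPaux.inv_step k (k - 1) 1 (N + 3) _ hInvR (by omega)
  obtain ⟨tb, htb⟩ := TPaux.inv_step k (k - 1) 1 (N + 3) _ hInvB (by omega)
  have hnum : 2 * k - 1 = 2 * (k - 1) + 1 := by omega
  rw [hnum]
  exact TPaux.forces_builderWins hfin
    ⟨.node s(N, N + 1) tr tb, TPaux.Forces.step hd1 hc1 htr htb⟩
end

section
/- Joining two blue half-paths (even k): let k ≥ 4 be even, and suppose the board contains two vertex-disjoint blue paths P and Q, each on k/2 vertices, with chosen endpoints p of P and q of Q. Then within k rounds Builder can force either a red C_k or a blue path on at least k/2 vertices of V(P) ∪ V(Q) whose endpoints are p and q. -/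
open SimpleGraph

/-! ### Auxiliary development -/

section JoinAux
variable (u v : ℕ → ℕ) (m : ℕ)

/-- The cyclic order of vertices used by Builder. -/
def jcyc (i : ℕ) : ℕ := if i % 2 = 0 then v (i / 2) else u (m - 1 - i / 2)

/-- The `t`-th edge Builder asks. -/
def jE (t : ℕ) : Sym2 ℕ := s(jcyc u v m t, jcyc u v m ((t + 1) % (2 * m)))

/-- Edge enumeration with fallback fresh edges. -/
def jedge (t : ℕ) : Sym2 ℕ := if t < 2 * m then jE u v m t else s(2 * t, 2 * t + 1)

open Classical in
/-- Builder's strategy: ask the first unasked edge of the enumeration. -/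
noncomputable def jstrat : BuilderStrat := fun B =>
  if h : ∃ n, jedge u v m n ∉ B.colored then jedge u v m (Nat.find h) else s(0, 1)

/-- The initial board. -/
def jinit : Board :=
  (∅, {e | ∃ j : ℕ, j + 1 < m ∧ (e = s(u j, u (j + 1)) ∨ e = s(v j, v (j + 1)))})

variable {u v m}
variable (hm : 2 ≤ m)
  (hu : ∀ x y, x < m → y < m → u x = u y → x = y)
  (hv : ∀ x y, x < m → y < m → v x = v y → x = y)
  (hdisj : ∀ x y, x < m → y < m → u x ≠ v y)

lemma jmod (x : ℕ) (hx : x < 2 * (2 * m)) :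
    x % (2 * m) = if x < 2 * m then x else x - 2 * m := by
  rcases Nat.eq_zero_or_pos m with h0 | h0
  · omega
  split_ifs with h
  · exact Nat.mod_eq_of_lt h
  · rw [Nat.mod_eq_sub_mod (by omega), Nat.mod_eq_of_lt (by omega)]

include hm hu hv hdisj

lemma jcyc_inj : ∀ x y, x < 2 * m → y < 2 * m → jcyc u v m x = jcyc u v m y → x = y := by
  intro x y hx hy h
  unfold jcyc at h
  by_cases hx2 : x % 2 = 0 <;> by_cases hy2 : y % 2 = 0
  · rw [if_pos hx2, if_pos hy2] at h
    have := hv _ _ (by omega) (by omega) h; omega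
  · rw [if_pos hx2, if_neg hy2] at h
    exact absurd h.symm (hdisj _ _ (by omega) (by omega))
  · rw [if_neg hx2, if_pos hy2] at h
    exact absurd h (hdisj _ _ (by omega) (by omega))
  · rw [if_neg hx2, if_neg hy2] at h
    have := hu _ _ (by omega) (by omega) h; omega

omit hu hv hdisj in
lemma jE_cross : ∀ t, t < 2 * m →
    ∃ a b, a < m ∧ b < m ∧ a + b ≤ m ∧ jE u v m t = s(u a, v b) := by
  intro t ht
  unfold jE jcyc
  by_cases ht2 : t % 2 = 0
  · refine ⟨m - 1 - t / 2, t / 2, by omega, by omega, by omega, ?_⟩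
    rw [Nat.mod_eq_of_lt (show t + 1 < 2 * m by omega), if_pos ht2,
      if_neg (show ¬ (t + 1) % 2 = 0 by omega)]
    have h3 : (t + 1) / 2 = t / 2 := by omega
    rw [h3, Sym2.eq_swap]
  · rcases Nat.lt_or_ge (t + 1) (2 * m) with h1 | h1
    · refine ⟨m - 1 - t / 2, t / 2 + 1, by omega, by omega, by omega, ?_⟩
      rw [Nat.mod_eq_of_lt (show t + 1 < 2 * m by omega), if_neg ht2,
        if_pos (show (t + 1) % 2 = 0 by omega)]
      have h3 : (t + 1) / 2 = t / 2 + 1 := by omega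
      rw [h3]
    · refine ⟨0, 0, by omega, by omega, by omega, ?_⟩
      have h2 : (t + 1) % (2 * m) = 0 := by
        have h3 : t + 1 = 2 * m := by omega
        rw [h3, Nat.mod_self]
      rw [h2, if_neg ht2, if_pos (by norm_num)]
      have h4 : m - 1 - t / 2 = 0 := by omega
      rw [h4]

lemma jE_nonloop : ∀ t, t < 2 * m → ¬ (jE u v m t).IsDiag := by
  intro t ht h
  obtain ⟨a, b, ha, hb, -, he⟩ := jE_cross hm t ht
  rw [he, Sym2.mk_isDiag_iff] at h
  exact hdisj _ _ ha hb h

lemma jedge_nonloop : ∀ t, ¬ (jedge u v m t).IsDiag := by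
  intro t
  rw [jedge]
  split_ifs with h
  · exact jE_nonloop hm hu hv hdisj t h
  · rw [Sym2.mk_isDiag_iff]; omega

lemma jE_not_init : ∀ t, t < 2 * m → jE u v m t ∉ (jinit u v m).colored := by
  intro t ht h
  obtain ⟨a, b, ha, hb, -, he⟩ := jE_cross hm t ht
  rcases h with h | h
  · exact h
  · obtain ⟨j, hj, hc | hc⟩ := h <;> rw [he] at hc <;> rw [Sym2.eq_iff] at hc
    · rcases hc with ⟨-, h2⟩ | ⟨-, h2⟩
      · exact hdisj _ _ (by omega) hb h2.symm
      · exact hdisj _ _ (by omega) hb h2.symm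
    · rcases hc with ⟨h2, -⟩ | ⟨h2, -⟩
      · exact hdisj _ _ ha (by omega) h2
      · exact hdisj _ _ ha (by omega) h2

lemma jE_inj : ∀ t t', t < 2 * m → t' < 2 * m → jE u v m t = jE u v m t' → t = t' := by
  intro t t' ht ht' h
  have hs : ∀ s : ℕ, s < 2 * m → (s + 1) % (2 * m) < 2 * m := fun s hsx =>
    Nat.mod_lt _ (by omega)
  unfold jE at h
  rw [Sym2.eq_iff] at h
  have ci := jcyc_inj hm hu hv hdisj
  rcases h with ⟨h1, h2⟩ | ⟨h1, h2⟩
  · exact ci _ _ ht ht' h1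
  · have e1 : t = (t' + 1) % (2 * m) := ci _ _ ht (hs t' ht') h1
    have e2 : (t + 1) % (2 * m) = t' := ci _ _ (hs t ht) ht' h2
    rw [jmod _ (by omega)] at e1 e2
    split_ifs at e1 e2 <;> omega

omit hm hu hv hdisj in
lemma jinit_colored_finite : (jinit u v m).colored.Finite := by
  have hsub : (jinit u v m).colored ⊆
      ((fun j => s(u j, u (j + 1))) '' Set.Iio m) ∪ ((fun j => s(v j, v (j + 1))) '' Set.Iio m) := by
    rintro e (he | he)
    · cases he
    · obtain ⟨j, hj, h | h⟩ := he
      · exact Or.inl ⟨j, Set.mem_Iio.mpr (by omega), h.symm⟩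
      · exact Or.inr ⟨j, Set.mem_Iio.mpr (by omega), h.symm⟩
  exact (((Set.finite_Iio m).image _).union ((Set.finite_Iio m).image _)).subset hsub

omit hm hu hv hdisj in
lemma jexists_uncolored (B : Board) (hfin : B.colored.Finite) :
    ∃ n, jedge u v m n ∉ B.colored := by
  by_contra hc
  push_neg at hc
  have hinj : Function.Injective (fun n : ℕ => s(2 * (n + 2 * m), 2 * (n + 2 * m) + 1)) := by
    intro a b h
    simp only [Sym2.eq_iff] at h
    omega
  have hmem : ∀ n : ℕ, s(2 * (n + 2 * m), 2 * (n + 2 * m) + 1) ∈ B.colored := by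
    intro n
    have h := hc (n + 2 * m)
    rwa [jedge, if_neg (by omega)] at h
  exact (Set.infinite_of_injective_forall_mem hinj hmem) hfin

omit hm hu hv hdisj in
lemma jstrat_spec (B : Board) (hfin : B.colored.Finite) :
    ∃ n, jstrat u v m B = jedge u v m n ∧ jedge u v m n ∉ B.colored := by
  classical
  have h := jexists_uncolored (u := u) (v := v) (m := m) B hfin
  refine ⟨Nat.find h, ?_, Nat.find_spec h⟩
  rw [jstrat, dif_pos h]

end JoinAux

section GameLemmas

variable (b : BuilderStrat) (p : PainterStrat) (init : Board)

lemma play_succ_of_false (t : ℕ)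
    (h : p (playGame b p init t) (b (playGame b p init t)) = false) :
    playGame b p init (t + 1) =
      ((playGame b p init t).1, insert (b (playGame b p init t)) (playGame b p init t).2) := by
  simp [playGame, h]

lemma play_succ_of_true (t : ℕ)
    (h : p (playGame b p init t) (b (playGame b p init t)) = true) :
    playGame b p init (t + 1) =
      (insert (b (playGame b p init t)) (playGame b p init t).1, (playGame b p init t).2) := by
  simp [playGame, h]

lemma play_step1 (t : ℕ) : (playGame b p init t).1 ⊆ (playGame b p init (t + 1)).1 := by
  cases h : p (playGame b p init t) (b (playGame b p init t))
  · rw [play_succ_of_false _ _ _ _ h]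
  · rw [play_succ_of_true _ _ _ _ h]
    exact Set.subset_insert _ _

lemma play_step2 (t : ℕ) : (playGame b p init t).2 ⊆ (playGame b p init (t + 1)).2 := by
  cases h : p (playGame b p init t) (b (playGame b p init t))
  · rw [play_succ_of_false _ _ _ _ h]
    exact Set.subset_insert _ _
  · rw [play_succ_of_true _ _ _ _ h]

lemma play_mono1 {t t' : ℕ} (h : t ≤ t') :
    (playGame b p init t).1 ⊆ (playGame b p init t').1 := by
  induction t' with
  | zero => obtain rfl : t = 0 := by omega
            exact subset_rfl
  | succ n ih =>
    rcases Nat.eq_or_lt_of_le h with h1 | h1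
    · subst h1; exact subset_rfl
    · exact (ih (by omega)).trans (play_step1 b p init n)

lemma play_mono2 {t t' : ℕ} (h : t ≤ t') :
    (playGame b p init t).2 ⊆ (playGame b p init t').2 := by
  induction t' with
  | zero => obtain rfl : t = 0 := by omega
            exact subset_rfl
  | succ n ih =>
    rcases Nat.eq_or_lt_of_le h with h1 | h1
    · subst h1; exact subset_rfl
    · exact (ih (by omega)).trans (play_step2 b p init n)

lemma colored_succ (t : ℕ) : (playGame b p init (t + 1)).colored =
    insert (b (playGame b p init t)) ((playGame b p init t).colored) := by
  cases h : p (playGame b p init t) (b (playGame b p init t))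
  · rw [play_succ_of_false _ _ _ _ h]
    simp [Board.colored, Set.union_insert]
  · rw [play_succ_of_true _ _ _ _ h]
    simp [Board.colored, Set.insert_union]

lemma play_colored_finite (hfin : init.colored.Finite) (t : ℕ) :
    (playGame b p init t).colored.Finite := by
  induction t with
  | zero => exact hfin
  | succ n ih =>
    rw [colored_succ]
    exact ih.insert _

end GameLemmas

section Main

variable {u v : ℕ → ℕ} {m : ℕ}
variable (hm : 2 ≤ m)
  (hu : ∀ x y, x < m → y < m → u x = u y → x = y)
  (hv : ∀ x y, x < m → y < m → v x = v y → x = y)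
  (hdisj : ∀ x y, x < m → y < m → u x ≠ v y)

include hm hu hv hdisj

lemma jstrat_valid : ValidFrom (jstrat u v m) (jinit u v m) := by
  intro p t
  obtain ⟨n, hn, hfresh⟩ := jstrat_spec _
    (play_colored_finite _ _ _ (jinit_colored_finite (u := u) (v := v) (m := m)) t)
  rw [hn]
  exact ⟨jedge_nonloop hm hu hv hdisj n, hfresh⟩

lemma jinvariant (p : PainterStrat) : ∀ t, t ≤ 2 * m →
    (∀ e, e ∈ (playGame (jstrat u v m) p (jinit u v m) t).colored ↔
      e ∈ (jinit u v m).colored ∨ ∃ j, j < t ∧ e = jE u v m j) ∧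
    (t < 2 * m → jstrat u v m (playGame (jstrat u v m) p (jinit u v m) t) = jE u v m t) := by
  classical
  intro t
  induction t with
  | zero =>
    intro _
    refine ⟨fun e => ⟨fun h => Or.inl h, ?_⟩, ?_⟩
    · rintro (h | ⟨j, hj, -⟩)
      · exact h
      · omega
    · intro h0
      have h := jexists_uncolored (u := u) (v := v) (m := m) _
        (jinit_colored_finite (u := u) (v := v) (m := m))
      show jstrat u v m (jinit u v m) = _
      rw [jstrat, dif_pos h]
      have hf : Nat.find h = 0 := by
        rw [Nat.find_eq_zero]
        rw [jedge, if_pos (by omega)]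
        exact jE_not_init hm hu hv hdisj 0 (by omega)
      rw [hf, jedge, if_pos (by omega)]
  | succ n ih =>
    intro hn1
    have hns := ih (by omega)
    have hasked := hns.2 (by omega)
    have hcol : ∀ e, e ∈ (playGame (jstrat u v m) p (jinit u v m) (n + 1)).colored ↔
        e ∈ (jinit u v m).colored ∨ ∃ j, j < n + 1 ∧ e = jE u v m j := by
      intro e
      rw [colored_succ, hasked]
      constructor
      · intro he
        rcases Set.mem_insert_iff.mp he with rfl | he2
        · exact Or.inr ⟨n, by omega, rfl⟩
        · rcases (hns.1 e).mp he2 with h | ⟨j, hj, rfl⟩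
          · exact Or.inl h
          · exact Or.inr ⟨j, by omega, rfl⟩
      · rintro (h | ⟨j, hj, rfl⟩)
        · exact Set.mem_insert_of_mem _ ((hns.1 e).mpr (Or.inl h))
        · rcases Nat.lt_or_ge j n with hj2 | hj2
          · exact Set.mem_insert_of_mem _ ((hns.1 _).mpr (Or.inr ⟨j, hj2, rfl⟩))
          · obtain rfl : j = n := by omega
            exact Set.mem_insert _ _
    refine ⟨hcol, ?_⟩
    intro hlt
    have h := jexists_uncolored (u := u) (v := v) (m := m)
      (playGame (jstrat u v m) p (jinit u v m) (n + 1))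
      (play_colored_finite (jstrat u v m) p (jinit u v m)
        (jinit_colored_finite (u := u) (v := v) (m := m)) (n + 1))
    rw [jstrat, dif_pos h]
    have hfind : Nat.find h = n + 1 := by
      rw [Nat.find_eq_iff]
      constructor
      · rw [jedge, if_pos hlt]
        intro hmem
        rcases (hcol _).mp hmem with h1 | ⟨j, hj, h2⟩
        · exact jE_not_init hm hu hv hdisj _ hlt h1
        · have := jE_inj hm hu hv hdisj _ _ hlt (by omega) h2
          omega
      · intro j hj
        rw [not_not, jedge, if_pos (by omega)]
        exact (hcol _).mpr (Or.inr ⟨j, hj, rfl⟩)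
    rw [hfind, jedge, if_pos hlt]

lemma jblue (B : Board) (t : ℕ) (ht : t < 2 * m)
    (hinit : (jinit u v m).2 ⊆ B.2) (hE : jE u v m t ∈ B.2) :
    ∃ s : ℕ, m ≤ s ∧ ∃ g : ℕ → ℕ,
      (∀ a c, a < s → c < s → g a = g c → a = c) ∧
      (∀ j, j + 1 < s → s(g j, g (j + 1)) ∈ B.2) ∧
      (∀ a, a < s → ∃ j, j < m ∧ (g a = u j ∨ g a = v j)) ∧
      g 0 = u (m - 1) ∧ g (s - 1) = v (m - 1) := by
  obtain ⟨a, b, ha, hb, hab, he⟩ := jE_cross (u := u) (v := v) hm t ht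
  refine ⟨(m - a) + (m - b), by omega,
    fun j => if j < m - a then u (m - 1 - j) else v (b + (j - (m - a))), ?_, ?_, ?_, ?_, ?_⟩
  · intro x y hx hy hxy
    beta_reduce at hxy
    by_cases hx1 : x < m - a <;> by_cases hy1 : y < m - a
    · rw [if_pos hx1, if_pos hy1] at hxy
      have := hu _ _ (by omega) (by omega) hxy; omega
    · rw [if_pos hx1, if_neg hy1] at hxy
      exact absurd hxy (hdisj _ _ (by omega) (by omega))
    · rw [if_neg hx1, if_pos hy1] at hxy
      exact absurd hxy.symm (hdisj _ _ (by omega) (by omega))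
    · rw [if_neg hx1, if_neg hy1] at hxy
      have := hv _ _ (by omega) (by omega) hxy; omega
  · intro j hj
    beta_reduce
    rcases Nat.lt_or_ge (j + 1) (m - a) with h1 | h1
    · rw [if_pos (by omega), if_pos h1]
      apply hinit
      refine ⟨m - 2 - j, by omega, Or.inl ?_⟩
      have e1 : m - 1 - j = (m - 2 - j) + 1 := by omega
      have e2 : m - 1 - (j + 1) = m - 2 - j := by omega
      rw [e2, e1]
      exact Sym2.eq_swap
    · rcases Nat.lt_or_ge j (m - a) with h2 | h2
      · rw [if_pos h2, if_neg (by omega)]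
        have e1 : m - 1 - j = a := by omega
        have e2 : b + (j + 1 - (m - a)) = b := by omega
        rw [e1, e2, ← he]
        exact hE
      · rw [if_neg (by omega), if_neg (by omega)]
        apply hinit
        refine ⟨b + (j - (m - a)), by omega, Or.inr ?_⟩
        have e2 : b + (j + 1 - (m - a)) = b + (j - (m - a)) + 1 := by omega
        rw [e2]
  · intro x hx
    by_cases h1 : x < m - a
    · exact ⟨m - 1 - x, by omega, Or.inl (by beta_reduce; rw [if_pos h1])⟩
    · exact ⟨b + (x - (m - a)), by omega, Or.inr (by beta_reduce; rw [if_neg h1])⟩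
  · beta_reduce
    rw [if_pos (by omega), Nat.sub_zero]
  · beta_reduce
    rw [if_neg (by omega)]
    congr 1
    omega

lemma jred (B : Board) (hall : ∀ t, t < 2 * m → jE u v m t ∈ B.1) :
    HasCopy (SimpleGraph.cycleGraph (2 * m)) (SimpleGraph.fromEdgeSet B.1) := by
  have ci := jcyc_inj hm hu hv hdisj
  refine ⟨⟨fun i => jcyc u v m i.val, fun i j hij => Fin.ext (ci _ _ i.isLt j.isLt hij)⟩, ?_⟩
  intro i j hadj
  have hne : jcyc u v m i.val ≠ jcyc u v m j.val := by
    intro h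
    exact hadj.ne (Fin.ext (ci _ _ i.isLt j.isLt h))
  rw [SimpleGraph.cycleGraph_adj'] at hadj
  rw [SimpleGraph.fromEdgeSet_adj]
  refine ⟨?_, hne⟩
  rcases hadj with h1 | h1
  · simp only [Fin.sub_def] at h1
    have hi : i.val = (j.val + 1) % (2 * m) := by
      have hj2 := j.isLt
      have hi2 := i.isLt
      rw [jmod _ (by omega)] at h1
      rw [jmod _ (by omega)]
      split_ifs at h1 ⊢ <;> omega
    show s(jcyc u v m i.val, jcyc u v m j.val) ∈ B.1
    rw [hi, Sym2.eq_swap]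
    exact hall j.val j.isLt
  · simp only [Fin.sub_def] at h1
    have hj : j.val = (i.val + 1) % (2 * m) := by
      have hj2 := j.isLt
      have hi2 := i.isLt
      rw [jmod _ (by omega)] at h1
      rw [jmod _ (by omega)]
      split_ifs at h1 ⊢ <;> omega
    show s(jcyc u v m i.val, jcyc u v m j.val) ∈ B.1
    rw [hj]
    exact hall i.val i.isLt

end Main

/-- Joining two blue half-paths (even `k`): given two vertex-disjoint blue paths on
`k/2` vertices each, with chosen endpoints `p = u (k/2 - 1)` and `q = v (k/2 - 1)`,
within `k` rounds Builder can force a red `C_k` or a blue path on at least `k/2`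
vertices of `V(P) ∪ V(Q)` with endpoints `p` and `q`. -/
theorem join_two_half_paths_even (k : ℕ) (hk : 4 ≤ k) (hke : Even k)
    (u v : ℕ → ℕ)
    (hu : ∀ x y, x < k / 2 → y < k / 2 → u x = u y → x = y)
    (hv : ∀ x y, x < k / 2 → y < k / 2 → v x = v y → x = y)
    (hdisj : ∀ x y, x < k / 2 → y < k / 2 → u x ≠ v y) :
    BuilderWinsIn
      (∅, {e | ∃ j : ℕ, j + 1 < k / 2 ∧
        (e = s(u j, u (j + 1)) ∨ e = s(v j, v (j + 1)))})
      (fun B => RedCopy (SimpleGraph.cycleGraph k) B ∨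
        ∃ s : ℕ, k / 2 ≤ s ∧ ∃ g : ℕ → ℕ,
          (∀ a c, a < s → c < s → g a = g c → a = c) ∧
          (∀ j, j + 1 < s → s(g j, g (j + 1)) ∈ B.2) ∧
          (∀ a, a < s → ∃ j, j < k / 2 ∧ (g a = u j ∨ g a = v j)) ∧
          g 0 = u (k / 2 - 1) ∧ g (s - 1) = v (k / 2 - 1))
      k := by
  classical
  obtain ⟨r, hr⟩ := hke
  subst hr
  have h2 : (r + r) / 2 = r := by omega
  rw [h2] at hu hv hdisj ⊢
  have h3 : r + r = 2 * r := by ring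
  rw [h3] at hk ⊢
  have hm : 2 ≤ r := by omega
  refine ⟨jstrat u v r, jstrat_valid hm hu hv hdisj, ?_⟩
  intro p
  rw [show ((∅, {e | ∃ j : ℕ, j + 1 < r ∧
      (e = s(u j, u (j + 1)) ∨ e = s(v j, v (j + 1)))}) : Board) = jinit u v r from rfl]
  by_cases hblue : ∃ t, t < 2 * r ∧
      p (playGame (jstrat u v r) p (jinit u v r) t)
        (jstrat u v r (playGame (jstrat u v r) p (jinit u v r) t)) = false
  · obtain ⟨t, ht, hf⟩ := hblue
    refine ⟨t + 1, by omega, Or.inr ?_⟩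
    have hasked := (jinvariant hm hu hv hdisj p t (by omega)).2 ht
    rw [show (playGame (jstrat u v r) p (jinit u v r) (t + 1) : Board) =
      ((playGame (jstrat u v r) p (jinit u v r) t).1,
        insert (jstrat u v r (playGame (jstrat u v r) p (jinit u v r) t))
          (playGame (jstrat u v r) p (jinit u v r) t).2) from
      play_succ_of_false _ _ _ _ hf]
    rw [hasked]
    exact jblue hm hu hv hdisj _ t ht
      ((play_mono2 _ _ _ (Nat.zero_le t)).trans (Set.subset_insert _ _))
      (Set.mem_insert _ _)
  · push_neg at hblue
    simp only [Bool.not_eq_false] at hblue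
    refine ⟨2 * r, le_rfl, Or.inl ?_⟩
    apply jred hm hu hv hdisj
    intro t ht
    have hasked := (jinvariant hm hu hv hdisj p t (by omega)).2 ht
    have hmem : jE u v r t ∈ (playGame (jstrat u v r) p (jinit u v r) (t + 1)).1 := by
      rw [play_succ_of_true _ _ _ _ (hblue t ht), hasked]
      exact Set.mem_insert _ _
    exact play_mono1 _ _ _ (by omega : t + 1 ≤ 2 * r) hmem
end

section
/- Let k ≥ 4 be even and let H be a blue line forest on m > k/2 vertices with exactly two components. Then r̃_H(C_k, P_{m − k/2}) ≤ k: within k rounds Builder can force a red C_k or a blue path on m − k/2 vertices. -/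
open SimpleGraph

/-! ### Auxiliary machinery -/

open Classical in
/-- A fresh non-loop edge not yet on the board (if one exists). -/
noncomputable def freshEdge (B : Board) : Sym2 ℕ :=
  if h : ∃ e : Sym2 ℕ, ¬ e.IsDiag ∧ e ∉ B.colored then h.choose else s(0, 1)

lemma freshEdge_spec {B : Board} (h : B.colored.Finite) :
    ¬ (freshEdge B).IsDiag ∧ freshEdge B ∉ B.colored := by
  have hex : ∃ e : Sym2 ℕ, ¬ e.IsDiag ∧ e ∉ B.colored := by
    by_contra hc
    push_neg at hc
    have hsub : Set.range (fun n : ℕ => s(2 * n, 2 * n + 1)) ⊆ B.colored := by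
      rintro e ⟨n, rfl⟩
      refine hc _ ?_
      simp only [Sym2.isDiag_iff_proj_eq]
      omega
    have hinj : Function.Injective (fun n : ℕ => s(2 * n, 2 * n + 1)) := by
      intro a b hab
      simp only [Sym2.eq, Sym2.rel_iff', Prod.mk.injEq, Prod.swap_prod_mk] at hab
      omega
    exact ((Set.infinite_range_of_injective hinj).mono hsub) h
  rw [freshEdge, dif_pos hex]
  exact hex.choose_spec

lemma colored_finite_playGame {b : BuilderStrat} {p : PainterStrat} {init : Board}
    (h : init.colored.Finite) (t : ℕ) : (playGame b p init t).colored.Finite := by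
  induction t with
  | zero => exact h
  | succ t ih =>
    simp only [playGame]
    split
    · exact (Set.Finite.insert _ ih).subset (by
        simp only [Board.colored, Set.insert_union]
        exact subset_rfl)
    · exact (Set.Finite.insert _ ih).subset (by
        simp only [Board.colored, Set.union_insert]
        exact subset_rfl)

lemma fresh_valid {init : Board} (h : init.colored.Finite) : ValidFrom freshEdge init :=
  fun _ t => freshEdge_spec (colored_finite_playGame h t)

open Classical in
/-- Builder strategy: play the first edge in `L` not yet on the board. -/
noncomputable def listStrat (L : List (Sym2 ℕ)) : BuilderStrat := fun B =>
  match L.find? (fun e => !decide (e ∈ B.colored)) with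
  | some e => e
  | none => freshEdge B

open Classical in
lemma listStrat_valid {L : List (Sym2 ℕ)} {init : Board}
    (hL : ∀ e ∈ L, ¬ e.IsDiag) (h : init.colored.Finite) :
    ValidFrom (listStrat L) init := by
  intro p t
  set B := playGame (listStrat L) p init t with hB
  have hBfin : B.colored.Finite := colored_finite_playGame h t
  show ¬ (listStrat L B).IsDiag ∧ listStrat L B ∉ B.colored
  unfold listStrat
  cases hfind : L.find? (fun e => !decide (e ∈ B.colored)) with
  | none => exact freshEdge_spec hBfin
  | some e =>
    have he := List.find?_some hfind
    have hm := List.mem_of_find?_eq_some hfind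
    simp only [Bool.not_eq_true', decide_eq_false_iff_not] at he
    exact ⟨hL e hm, he⟩

lemma find?_step {α : Type} {L : List α} {q : α → Bool} {t : ℕ} (ht : t < L.length)
    (hbefore : ∀ i, (h : i < t) → q (L.get ⟨i, h.trans ht⟩) = false)
    (hat : q (L.get ⟨t, ht⟩) = true) : L.find? q = some (L.get ⟨t, ht⟩) := by
  induction L generalizing t with
  | nil => simp at ht
  | cons a l ih =>
    cases t with
    | zero => exact List.find?_cons_of_pos hat
    | succ t =>
      have h0 : q a = false := hbefore 0 (Nat.succ_pos t)
      rw [List.find?_cons_of_neg (p := q) (a := a) (by simp [h0])]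
      exact ih (by simpa using ht) (fun i hi => hbefore (i + 1) (by omega)) hat

open Classical in
lemma listStrat_play {L : List (Sym2 ℕ)} {init : Board}
    (hnd : L.Nodup) (hni : ∀ e ∈ L, e ∉ init.colored) (p : PainterStrat) :
    ∀ t, t ≤ L.length →
      init.1 ⊆ (playGame (listStrat L) p init t).1 ∧
      init.2 ⊆ (playGame (listStrat L) p init t).2 ∧
      (playGame (listStrat L) p init t).colored = init.colored ∪ {e | e ∈ L.take t} := by
  intro t
  induction t with
  | zero =>
    intro _
    refine ⟨subset_rfl, subset_rfl, ?_⟩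
    simp [playGame, Board.colored]
  | succ t ih =>
    intro ht
    obtain ⟨ih1, ih2, ih3⟩ := ih (by omega)
    set B := playGame (listStrat L) p init t with hBdef
    have htl : t < L.length := by omega
    have hbefore : ∀ i, (h : i < t) → (fun e => !decide (e ∈ B.colored))
        (L.get ⟨i, h.trans htl⟩) = false := by
      intro i hi
      have : L.get ⟨i, hi.trans htl⟩ ∈ B.colored := by
        rw [ih3]
        right
        have : (L.take t).get ⟨i, by simp [List.length_take]; omega⟩ = L.get ⟨i, hi.trans htl⟩ := by
          simp [List.get_eq_getElem, List.getElem_take]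
        rw [← this]
        exact Set.mem_setOf.mpr (List.get_mem _ _)
      simpa using this
    have hat : (fun e => !decide (e ∈ B.colored)) (L.get ⟨t, htl⟩) = true := by
      have h1 : L.get ⟨t, htl⟩ ∉ init.colored := hni _ (List.get_mem _ _)
      have h2 : L.get ⟨t, htl⟩ ∉ {e | e ∈ L.take t} := by
        intro hmem
        simp only [Set.mem_setOf_eq] at hmem
        obtain ⟨i, hi, hieq⟩ := List.mem_iff_getElem.mp hmem
        rw [List.length_take] at hi
        rw [List.getElem_take] at hieq
        have : i = t := by
          have := List.nodup_iff_injective_get.mp hnd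
            (a₁ := ⟨i, by omega⟩) (a₂ := ⟨t, htl⟩) (by simpa [List.get_eq_getElem] using hieq)
          simpa using congrArg Fin.val this
        omega
      have : L.get ⟨t, htl⟩ ∉ B.colored := by
        rw [ih3]
        rintro (h | h)
        · exact h1 h
        · exact h2 h
      simpa using this
    have hstrat : listStrat L B = L.get ⟨t, htl⟩ := by
      unfold listStrat
      rw [find?_step htl hbefore hat]
    have htake : {e | e ∈ L.take (t + 1)} = {e | e ∈ L.take t} ∪ {L.get ⟨t, htl⟩} := by
      have hsucc : L.take (t + 1) = L.take t ++ [L.get ⟨t, htl⟩] := by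
        rw [List.take_succ, List.getElem?_eq_getElem htl]
        rfl
      ext e
      rw [Set.mem_setOf_eq, hsucc, List.mem_append]
      simp [or_comm]
    have hstep : playGame (listStrat L) p init (t + 1) =
        if p B (listStrat L B) then (insert (listStrat L B) B.1, B.2)
        else (B.1, insert (listStrat L B) B.2) := rfl
    rw [hstep, hstrat]
    by_cases hp : p B (L.get ⟨t, htl⟩)
    · rw [if_pos hp]
      refine ⟨ih1.trans (Set.subset_insert _ _), ih2, ?_⟩
      show insert (L.get ⟨t, htl⟩) B.1 ∪ B.2 = init.colored ∪ {e | e ∈ L.take (t + 1)}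
      rw [htake, Set.insert_union, show B.1 ∪ B.2 = B.colored from rfl, ih3]
      ext e
      simp only [Set.mem_insert_iff, Set.mem_union, Set.mem_singleton_iff]
      tauto
    · rw [if_neg hp]
      refine ⟨ih1, ih2.trans (Set.subset_insert _ _), ?_⟩
      show B.1 ∪ insert (L.get ⟨t, htl⟩) B.2 = init.colored ∪ {e | e ∈ L.take (t + 1)}
      rw [htake, Set.union_insert, show B.1 ∪ B.2 = B.colored from rfl, ih3]
      ext e
      simp only [Set.mem_insert_iff, Set.mem_union, Set.mem_singleton_iff]
      tauto

lemma listStrat_final {L : List (Sym2 ℕ)} {init : Board}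
    (hnd : L.Nodup) (hni : ∀ e ∈ L, e ∉ init.colored) (p : PainterStrat) :
    init.2 ⊆ (playGame (listStrat L) p init L.length).2 ∧
      ((∀ e ∈ L, e ∈ (playGame (listStrat L) p init L.length).1) ∨
        (∃ e ∈ L, e ∈ (playGame (listStrat L) p init L.length).2)) := by
  obtain ⟨h1, h2, h3⟩ := listStrat_play hnd hni p L.length le_rfl
  refine ⟨h2, ?_⟩
  by_cases hc : ∃ e ∈ L, e ∈ (playGame (listStrat L) p init L.length).2
  · exact Or.inr hc
  · push_neg at hc
    refine Or.inl fun e he => ?_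
    have : e ∈ (playGame (listStrat L) p init L.length).colored := by
      rw [h3]
      right
      simpa using he
    rcases this with h | h
    · exact h
    · exact absurd h (hc e he)

/-- A generic path copy lemma. -/
lemma pathCopy {n : ℕ} {S : Set (Sym2 ℕ)} (w : ℕ → ℕ)
    (hinj : ∀ x y, x < n → y < n → w x = w y → x = y)
    (hadj : ∀ i, i + 1 < n → s(w i, w (i + 1)) ∈ S) :
    HasCopy (pathGraph n) (fromEdgeSet S) := by
  refine ⟨⟨fun i => w i.val, (show Function.Injective (fun i : Fin n => w i.val) from
    fun x y h => Fin.ext (hinj _ _ x.isLt y.isLt h))⟩, ?_⟩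
  intro x y hxy
  rw [pathGraph_adj] at hxy
  rw [fromEdgeSet_adj]
  simp only [Function.Embedding.coeFn_mk]
  constructor
  · rcases hxy with h | h
    · rw [← h]; exact hadj x.val (h ▸ y.isLt)
    · rw [← h, Sym2.eq_swap]; exact hadj y.val (h ▸ x.isLt)
  · intro hw
    have := hinj _ _ x.isLt y.isLt hw
    omega

/-- A generic cycle copy lemma. -/
lemma cycleCopy {k : ℕ} (hk : 2 ≤ k) {S : Set (Sym2 ℕ)} (w : ℕ → ℕ)
    (hinj : ∀ x y, x < k → y < k → w x = w y → x = y)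
    (hadj : ∀ i, i < k → s(w i, w ((i + 1) % k)) ∈ S) :
    HasCopy (cycleGraph k) (fromEdgeSet S) := by
  obtain ⟨n, rfl⟩ : ∃ n, k = n + 2 := ⟨k - 2, by omega⟩
  refine ⟨⟨fun i => w i.val, (show Function.Injective (fun i : Fin (n + 2) => w i.val) from
    fun x y h => Fin.ext (hinj _ _ x.isLt y.isLt h))⟩, ?_⟩
  intro x y hxy
  have hne : x ≠ y := hxy.ne
  rw [cycleGraph_adj] at hxy
  rw [fromEdgeSet_adj]
  simp only [Function.Embedding.coeFn_mk]
  have hkey : x.val = (y.val + 1) % (n + 2) ∨ y.val = (x.val + 1) % (n + 2) := by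
    rcases hxy with h | h
    · left
      have hx : x = y + 1 := by rwa [sub_eq_iff_eq_add'] at h
      rw [hx, Fin.val_add, Fin.val_one]
    · right
      have hy : y = x + 1 := by rwa [sub_eq_iff_eq_add'] at h
      rw [hy, Fin.val_add, Fin.val_one]
  constructor
  · rcases hkey with h | h
    · rw [h, Sym2.eq_swap]; exact hadj y.val y.isLt
    · rw [h]; exact hadj x.val x.isLt
  · intro hw
    exact hne (Fin.ext (hinj _ _ x.isLt y.isLt hw))

/-- Building a blue path copy from the two initial blue paths joined by a bridge edge. -/
lemma blueBridge {n m₁ m₂ A B : ℕ} {S : Set (Sym2 ℕ)} {u v : ℕ → ℕ}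
    (hu : ∀ x y, x < m₁ → y < m₁ → u x = u y → x = y)
    (hv : ∀ x y, x < m₂ → y < m₂ → v x = v y → x = y)
    (hdisj : ∀ x y, x < m₁ → y < m₂ → u x ≠ v y)
    (hA : A < m₁) (hB : B < m₂) (hn : n ≤ A + B + 2)
    (hS1 : ∀ j, j + 1 ≤ A → s(u j, u (j + 1)) ∈ S)
    (hS2 : ∀ j, j + 1 ≤ B → s(v j, v (j + 1)) ∈ S)
    (hbr : s(u A, v B) ∈ S) :
    HasCopy (pathGraph n) (fromEdgeSet S) := by
  set d := A + B + 2 - n with hd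
  apply pathCopy (w := fun ℓ => if ℓ + d ≤ A then u (ℓ + d) else v (A + B + 1 - (ℓ + d)))
  · intro x y hx hy hxy
    by_cases h1 : x + d ≤ A <;> by_cases h2 : y + d ≤ A <;> simp only [h1, h2,
      if_true, if_false, if_pos, if_neg, not_false_iff] at hxy
    · have := hu _ _ (by omega) (by omega) hxy; omega
    · exact absurd hxy (hdisj _ _ (by omega) (by omega))
    · exact absurd hxy.symm (hdisj _ _ (by omega) (by omega))
    · have := hv _ _ (by omega) (by omega) hxy; omega
  · intro i hi
    have htot : i + 1 + d ≤ A + B + 1 := by omega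
    by_cases h1 : i + 1 + d ≤ A
    · rw [if_pos (show i + d ≤ A by omega), if_pos h1,
        show i + 1 + d = (i + d) + 1 by omega]
      exact hS1 _ (by omega)
    · by_cases h2 : i + d ≤ A
      · have hiA : i + d = A := by omega
        rw [if_pos h2, if_neg h1, hiA, show A + B + 1 - (i + 1 + d) = B by omega]
        exact hbr
      · rw [if_neg h2, if_neg h1,
          show A + B + 1 - (i + d) = (A + B + 1 - (i + 1 + d)) + 1 by omega, Sym2.eq_swap]
        exact hS2 _ (by omega)

/-- For even `k ≥ 4` and a blue line forest on `m > k/2` vertices with exactly two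
components, `r̃_H(C_k, P_{m - k/2}) ≤ k`. -/
theorem join_two_paths_even (k m m₁ m₂ : ℕ) (hk : 4 ≤ k) (hke : Even k)
    (hm : k / 2 < m) (hsum : m₁ + m₂ = m) (h1 : 1 ≤ m₁) (h2 : 1 ≤ m₂)
    (u v : ℕ → ℕ)
    (hu : ∀ x y, x < m₁ → y < m₁ → u x = u y → x = y)
    (hv : ∀ x y, x < m₂ → y < m₂ → v x = v y → x = y)
    (hdisj : ∀ x y, x < m₁ → y < m₂ → u x ≠ v y) :
    BuilderWinsIn
      (∅, {e | (∃ j : ℕ, j + 1 < m₁ ∧ e = s(u j, u (j + 1))) ∨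
               (∃ j : ℕ, j + 1 < m₂ ∧ e = s(v j, v (j + 1)))})
      (WinCP k (m - k / 2)) k := by
  set init : Board :=
    (∅, {e | (∃ j : ℕ, j + 1 < m₁ ∧ e = s(u j, u (j + 1))) ∨
             (∃ j : ℕ, j + 1 < m₂ ∧ e = s(v j, v (j + 1)))}) with hinit
  have hcol : init.colored = {e | ∃ j : ℕ, j + 1 < m₁ ∧ e = s(u j, u (j + 1))} ∪
      {e | ∃ j : ℕ, j + 1 < m₂ ∧ e = s(v j, v (j + 1))} := by
    have h2' : init.2 = {e | ∃ j : ℕ, j + 1 < m₁ ∧ e = s(u j, u (j + 1))} ∪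
        {e | ∃ j : ℕ, j + 1 < m₂ ∧ e = s(v j, v (j + 1))} := Set.setOf_or
    show (∅ : Set (Sym2 ℕ)) ∪ init.2 = _
    rw [h2', Set.empty_union]
  have hfin : init.colored.Finite := by
    rw [hcol]
    refine Set.Finite.union ?_ ?_
    · refine ((Set.finite_Iio m₁).image (fun j => s(u j, u (j + 1)))).subset ?_
      rintro e ⟨j, hj, rfl⟩
      exact ⟨j, by simpa using by omega, rfl⟩
    · refine ((Set.finite_Iio m₂).image (fun j => s(v j, v (j + 1)))).subset ?_
      rintro e ⟨j, hj, rfl⟩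
      exact ⟨j, by simpa using by omega, rfl⟩
  have hmem1 : ∀ j, j + 1 < m₁ → s(u j, u (j + 1)) ∈ init.2 := by
    intro j hj; exact Or.inl ⟨j, hj, rfl⟩
  have hmem2 : ∀ j, j + 1 < m₂ → s(v j, v (j + 1)) ∈ init.2 := by
    intro j hj; exact Or.inr ⟨j, hj, rfl⟩
  by_cases hdeg : m₂ ≤ k / 2 ∨ m₁ ≤ k / 2
  · refine ⟨freshEdge, fresh_valid hfin, fun p => ⟨0, by omega, Or.inr ?_⟩⟩
    show HasCopy (pathGraph (m - k / 2)) (fromEdgeSet init.2)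
    rcases hdeg with h | h
    · exact pathCopy u (fun x y hx hy => hu x y (by omega) (by omega))
        (fun i hi => hmem1 i (by omega))
    · exact pathCopy v (fun x y hx hy => hv x y (by omega) (by omega))
        (fun i hi => hmem2 i (by omega))
  · push_neg at hdeg
    obtain ⟨hm2, hm1⟩ := hdeg
    obtain ⟨r, hr⟩ : ∃ r, k = 2 * r := by
      obtain ⟨c, hc⟩ := hke; exact ⟨c, by omega⟩
    have hr2 : k / 2 = r := by omega
    rw [hr2] at hm1 hm2
    set f : ℕ → ℕ := fun i => if i % 2 = 0 then u (m₁ - 1 - i / 2) else v (m₂ - r + i / 2)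
      with hf
    have hfinj : ∀ x y, x < k → y < k → f x = f y → x = y := by
      intro x y hx hy hxy
      simp only [hf] at hxy
      by_cases px : x % 2 = 0 <;> by_cases py : y % 2 = 0
      · rw [if_pos px, if_pos py] at hxy
        have := hu _ _ (by omega) (by omega) hxy; omega
      · rw [if_pos px, if_neg py] at hxy
        exact absurd hxy (hdisj _ _ (by omega) (by omega))
      · rw [if_neg px, if_pos py] at hxy
        exact absurd hxy.symm (hdisj _ _ (by omega) (by omega))
      · rw [if_neg px, if_neg py] at hxy
        have := hv _ _ (by omega) (by omega) hxy; omega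
    have hsucc : ∀ i, i < k → (i + 1) % k = i + 1 ∨ ((i + 1) % k = 0 ∧ i + 1 = k) := by
      intro i hi
      rcases Nat.lt_or_ge (i + 1) k with h | h
      · exact Or.inl (Nat.mod_eq_of_lt h)
      · have hik : i + 1 = k := by omega
        exact Or.inr ⟨by rw [hik, Nat.mod_self], hik⟩
    have hform : ∀ i, i < k → ∃ a b, a < m₁ ∧ b < m₂ ∧ m - r ≤ a + b + 2 ∧
        s(f i, f ((i + 1) % k)) = s(u a, v b) := by
      intro i hi
      by_cases pi : i % 2 = 0
      · have hik : (i + 1) % k = i + 1 := Nat.mod_eq_of_lt (by omega)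
        refine ⟨m₁ - 1 - i / 2, m₂ - r + i / 2, by omega, by omega, by omega, ?_⟩
        have hfi : f i = u (m₁ - 1 - i / 2) := by
          simp only [hf]; rw [if_pos pi]
        have hfi1 : f (i + 1) = v (m₂ - r + i / 2) := by
          simp only [hf]; rw [if_neg (by omega), show (i + 1) / 2 = i / 2 by omega]
        rw [hik, hfi, hfi1]
      · rcases hsucc i hi with h | ⟨h0, hik⟩
        · refine ⟨m₁ - 1 - (i + 1) / 2, m₂ - r + i / 2, by omega, by omega, by omega, ?_⟩
          have hfi : f i = v (m₂ - r + i / 2) := by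
            simp only [hf]; rw [if_neg pi]
          have hfi1 : f (i + 1) = u (m₁ - 1 - (i + 1) / 2) := by
            simp only [hf]; rw [if_pos (by omega)]
          rw [h, hfi, hfi1, Sym2.eq_swap]
        · refine ⟨m₁ - 1, m₂ - 1, by omega, by omega, by omega, ?_⟩
          have hfi : f i = v (m₂ - r + i / 2) := by
            simp only [hf]; rw [if_neg pi]
          have hf0 : f 0 = u (m₁ - 1) := by
            simp [hf]
          rw [h0, hfi, hf0, Sym2.eq_swap, show m₂ - r + i / 2 = m₂ - 1 by omega]
    set L := List.ofFn (fun i : Fin k => s(f i.val, f ((i.val + 1) % k))) with hL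
    have hmemL : ∀ i, i < k → s(f i, f ((i + 1) % k)) ∈ L := by
      intro i hi
      rw [hL, List.mem_ofFn]
      exact ⟨⟨i, hi⟩, rfl⟩
    have hLmem : ∀ e ∈ L, ∃ i, i < k ∧ e = s(f i, f ((i + 1) % k)) := by
      intro e he
      rw [hL, List.mem_ofFn] at he
      obtain ⟨i, hi⟩ := he
      exact ⟨i.val, i.isLt, hi.symm⟩
    have hnd : L.Nodup := by
      rw [hL, List.nodup_ofFn]
      intro a b hab
      simp only [Sym2.eq, Sym2.rel_iff', Prod.mk.injEq, Prod.swap_prod_mk] at hab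
      have hka : (a.val + 1) % k < k := Nat.mod_lt _ (by omega)
      have hkb : (b.val + 1) % k < k := Nat.mod_lt _ (by omega)
      rcases hab with ⟨h1, h2⟩ | ⟨h1, h2⟩
      · exact Fin.ext (hfinj _ _ a.isLt b.isLt h1)
      · have e1 := hfinj _ _ a.isLt hkb h1
        have e2 := hfinj _ _ hka b.isLt h2
        have := hsucc a.val a.isLt
        have := hsucc b.val b.isLt
        apply Fin.ext
        omega
    have hdiag : ∀ e ∈ L, ¬ e.IsDiag := by
      intro e he
      obtain ⟨i, hi, rfl⟩ := hLmem e he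
      obtain ⟨a, b, ha, hb, _, heq⟩ := hform i hi
      rw [heq, Sym2.mk_isDiag_iff]
      exact hdisj a b ha hb
    have hni : ∀ e ∈ L, e ∉ init.colored := by
      intro e he hecol
      obtain ⟨i, hi, rfl⟩ := hLmem e he
      obtain ⟨a, b, ha, hb, _, heq⟩ := hform i hi
      rw [heq] at hecol
      rw [hcol] at hecol
      rcases hecol with ⟨j, hj, hej⟩ | ⟨j, hj, hej⟩
      · simp only [Sym2.eq, Sym2.rel_iff', Prod.mk.injEq, Prod.swap_prod_mk] at hej
        rcases hej with ⟨_, h⟩ | ⟨_, h⟩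
        · exact hdisj _ b (by omega) hb h.symm
        · exact hdisj _ b (by omega) hb h.symm
      · simp only [Sym2.eq, Sym2.rel_iff', Prod.mk.injEq, Prod.swap_prod_mk] at hej
        rcases hej with ⟨h, _⟩ | ⟨h, _⟩
        · exact hdisj a _ ha (by omega) h
        · exact hdisj a _ ha (by omega) h
    have hlen : L.length = k := by rw [hL, List.length_ofFn]
    refine ⟨listStrat L, listStrat_valid hdiag hfin, fun p => ?_⟩
    obtain ⟨hblue, hcase⟩ := listStrat_final hnd hni p
    refine ⟨L.length, by omega, ?_⟩
    rcases hcase with hall | ⟨e, he, hbe⟩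
    · left
      exact cycleCopy (by omega) f hfinj
        (fun i hi => hall _ (hmemL i hi))
    · right
      obtain ⟨i, hi, rfl⟩ := hLmem e he
      obtain ⟨a, b, ha, hb, hab, heq⟩ := hform i hi
      show HasCopy (pathGraph (m - k / 2)) _
      rw [hr2]
      refine blueBridge hu hv hdisj ha hb hab
        (fun j hj => hblue (hmem1 j (by omega)))
        (fun j hj => hblue (hmem2 j (by omega)))
        ?_
      rw [← heq]
      exact hbe
end
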